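/- arXiv:1204.3060 — 7 statements merged into one kernel-verified Lean document; each statement's English description precedes it below -/
import Mathlib

section
/- Let n ≥ 2 and let G be a graph on n vertices with minimum degree at least 1. Then the total number of independent sets in G satisfies i(G) ≤ i(K_{1,n-1}) = 2^{n-1} + 1. -/
open SimpleGraph

/-- `indepT G t` is the number of independent sets of size `t` in `G`,
i.e. the number of `t`-element vertex subsets spanning no edge. -/
noncomputable def indepT {V : Type*} [Fintype V] (G : SimpleGraph V) (t : ℕ) : ℕ :=
  Nat.card {s : Finset V // s.card = t ∧ ∀ u ∈ s, ∀ v ∈ s, ¬ G.Adj u v}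

/-- `indepAll G` is the total number of independent sets in `G` (including `∅`). -/
noncomputable def indepAll {V : Type*} [Fintype V] (G : SimpleGraph V) : ℕ :=
  Nat.card {s : Finset V // ∀ u ∈ s, ∀ v ∈ s, ¬ G.Adj u v}

/-- The degree of a vertex, as the cardinality of its neighbour set. -/
noncomputable def gdeg {V : Type*} (G : SimpleGraph V) (v : V) : ℕ :=
  (G.neighborSet v).ncard

section Aux

open Finset

variable {V : Type*} [DecidableEq V] (G : SimpleGraph V) [DecidableRel G.Adj]

/-- The finset of independent subsets of `A`. -/
def Fset (A : Finset V) : Finset (Finset V) :=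
  A.powerset.filter (fun s => ∀ u ∈ s, ∀ v ∈ s, ¬ G.Adj u v)

lemma mem_Fset {A s : Finset V} :
    s ∈ Fset G A ↔ s ⊆ A ∧ ∀ u ∈ s, ∀ v ∈ s, ¬ G.Adj u v := by
  simp [Fset]

lemma two_le_of_P {B : Finset V}
    (hP : ∀ v ∈ B, ∃ w ∈ B, G.Adj v w) (hne : B.Nonempty) : 2 ≤ B.card := by
  obtain ⟨v, hv⟩ := hne
  obtain ⟨w, hw, hadj⟩ := hP v hv
  exact Finset.one_lt_card.mpr ⟨v, hv, w, hw, (G.ne_of_adj hadj)⟩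

lemma main_bound :
    ∀ A : Finset V, (∀ v ∈ A, ∃ w ∈ A, G.Adj v w) → 2 ≤ A.card →
      (Fset G A).card ≤ 2 ^ (A.card - 1) + 1 := by
  intro A
  induction A using Finset.strongInduction with
  | _ A IH =>
    intro hP hcard
    by_cases hcase : ∃ u ∈ A, ∀ v ∈ A.erase u, ∃ w ∈ A.erase u, G.Adj v w
    · -- Case 1: removing `u` keeps the min-degree property.
      obtain ⟨u, huA, hP'⟩ := hcase
      obtain ⟨v, hvA, huv⟩ := hP u huA
      have hvu : v ≠ u := fun h => G.irrefl (h ▸ huv.symm)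
      have hne : (A.erase u).Nonempty := ⟨v, mem_erase.mpr ⟨hvu, hvA⟩⟩
      have h2' : 2 ≤ (A.erase u).card := two_le_of_P G hP' hne
      have hIH : (Fset G (A.erase u)).card ≤ 2 ^ ((A.erase u).card - 1) + 1 :=
        IH _ (erase_ssubset huA) hP' h2'
      -- split independent sets according to whether they contain `u`
      have hsplit :
          ((Fset G A).filter (fun s => u ∈ s)).card
            + ((Fset G A).filter (fun s => ¬ u ∈ s)).card = (Fset G A).card :=
        Finset.card_filter_add_card_filter_not _
      -- sets not containing u
      have hb1 : ((Fset G A).filter (fun s => ¬ u ∈ s)) ⊆ Fset G (A.erase u) := by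
        intro s hs
        rw [mem_filter, mem_Fset] at hs
        rw [mem_Fset]
        exact ⟨fun a ha => mem_erase.mpr ⟨fun h => hs.2 (h ▸ ha), hs.1.1 ha⟩, hs.1.2⟩
      -- sets containing u inject into subsets of A \ {u, v}
      have hb2 : ((Fset G A).filter (fun s => u ∈ s)).card
          ≤ ((A.erase u).erase v).powerset.card := by
        apply Finset.card_le_card_of_injOn (fun s => s.erase u)
        · intro s hs
          simp only [Finset.mem_coe] at hs ⊢
          rw [mem_filter, mem_Fset] at hs
          rw [mem_powerset]
          intro a ha
          rw [mem_erase] at ha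
          have haA := hs.1.1 ha.2
          have hav : a ≠ v := by
            rintro rfl
            exact hs.1.2 u hs.2 a ha.2 huv
          exact mem_erase.mpr ⟨hav, mem_erase.mpr ⟨ha.1, haA⟩⟩
        · intro s hs t ht h
          rw [mem_coe, mem_filter] at hs ht
          have := congrArg (insert u) h
          rwa [insert_erase hs.2, insert_erase ht.2] at this
      have hcardev : ((A.erase u).erase v).card = A.card - 2 := by
        rw [card_erase_of_mem (mem_erase.mpr ⟨hvu, hvA⟩), card_erase_of_mem huA]
        omega
      have h1 : (A.erase u).card = A.card - 1 := card_erase_of_mem huA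
      have e1 : (A.erase u).card - 1 = A.card - 2 := by omega
      rw [e1] at hIH
      have hpow : ((A.erase u).erase v).powerset.card = 2 ^ (A.card - 2) := by
        rw [card_powerset, hcardev]
      calc (Fset G A).card
          = ((Fset G A).filter (fun s => u ∈ s)).card
            + ((Fset G A).filter (fun s => ¬ u ∈ s)).card := hsplit.symm
        _ ≤ 2 ^ (A.card - 2) + (2 ^ (A.card - 2) + 1) := by
            gcongr
            · rw [← hpow]; exact hb2
            · exact le_trans (Finset.card_le_card hb1) hIH
        _ = 2 ^ (A.card - 2) + 2 ^ (A.card - 2) + 1 := by omega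
        _ ≤ 2 ^ (A.card - 1) + 1 := by
            have : A.card - 1 = (A.card - 2) + 1 := by omega
            rw [this, pow_succ]
            omega
    · -- Case 2: there is a pendant pair {x, y} isolated from the rest.
      push_neg at hcase
      have hAne : A.Nonempty := Finset.card_pos.mp (by omega)
      obtain ⟨x, hxA⟩ := hAne
      obtain ⟨y, hyAx, hy⟩ := hcase x hxA
      have hyA : y ∈ A := (mem_erase.mp hyAx).2
      have hyx : y ≠ x := (mem_erase.mp hyAx).1
      -- y's only neighbor in A is x
      have hyonly : ∀ w ∈ A, G.Adj y w → w = x := by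
        intro w hwA hadj
        by_contra hwx
        exact hy w (mem_erase.mpr ⟨hwx, hwA⟩) hadj
      have hadjyx : G.Adj y x := by
        obtain ⟨w, hwA, hadj⟩ := hP y hyA
        rwa [hyonly w hwA hadj] at hadj
      -- x's only neighbor in A is y
      obtain ⟨z, hzAy, hz⟩ := hcase y hyA
      have hzA : z ∈ A := (mem_erase.mp hzAy).2
      have hzonly : ∀ w ∈ A, G.Adj z w → w = y := by
        intro w hwA hadj
        by_contra hwy
        exact hz w (mem_erase.mpr ⟨hwy, hwA⟩) hadj
      have hadjzy : G.Adj z y := by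
        obtain ⟨w, hwA, hadj⟩ := hP z hzA
        rwa [hzonly w hwA hadj] at hadj
      have hzx : z = x := hyonly z hzA hadjzy.symm
      have hxonly : ∀ w ∈ A, G.Adj x w → w = y := hzx ▸ hzonly
      set B := (A.erase x).erase y with hB
      have hmemB : ∀ a, a ∈ B ↔ a ≠ y ∧ a ≠ x ∧ a ∈ A := by
        intro a; simp [hB, mem_erase, and_assoc]
      have hPB : ∀ v ∈ B, ∃ w ∈ B, G.Adj v w := by
        intro v hv
        rw [hmemB] at hv
        obtain ⟨hvy, hvx, hvA⟩ := hv
        obtain ⟨w, hwA, hadj⟩ := hP v hvA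
        refine ⟨w, (hmemB w).mpr ⟨?_, ?_, hwA⟩, hadj⟩
        · rintro rfl; exact hvx (hyonly v hvA hadj.symm)
        · rintro rfl; exact hvy (hxonly v hvA hadj.symm)
      -- Fset G A injects into {∅, {x}, {y}} × Fset G B
      have hinj : (Fset G A).card
          ≤ (({∅, {x}, {y}} : Finset (Finset V)) ×ˢ Fset G B).card := by
        apply Finset.card_le_card_of_injOn (fun s => (s ∩ {x, y}, s \ {x, y}))
        · intro s hs
          simp only [Finset.mem_coe] at hs ⊢
          rw [mem_Fset] at hs
          rw [mem_product]
          constructor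
          · have hnot : ¬ (x ∈ s ∧ y ∈ s) := by
              rintro ⟨hx, hy'⟩
              exact hs.2 y hy' x hx hadjyx
            by_cases hx : x ∈ s <;> by_cases hy' : y ∈ s
            · exact absurd ⟨hx, hy'⟩ hnot
            · have : s ∩ {x, y} = {x} := by
                ext a
                simp only [mem_inter, mem_insert, mem_singleton]
                constructor
                · rintro ⟨has, rfl | rfl⟩
                  · rfl
                  · exact absurd has hy'
                · rintro rfl; exact ⟨hx, Or.inl rfl⟩
              rw [this]; simp
            · have : s ∩ {x, y} = {y} := by
                ext a
                simp only [mem_inter, mem_insert, mem_singleton]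
                constructor
                · rintro ⟨has, rfl | rfl⟩
                  · exact absurd has hx
                  · rfl
                · rintro rfl; exact ⟨hy', Or.inr rfl⟩
              rw [this]; simp
            · have : s ∩ {x, y} = ∅ := by
                ext a
                simp only [mem_inter, mem_insert, mem_singleton, notMem_empty, iff_false]
                rintro ⟨has, rfl | rfl⟩
                exacts [hx has, hy' has]
              rw [this]; simp
          · rw [mem_Fset]
            constructor
            · intro a ha
              rw [mem_sdiff] at ha
              rw [hmemB]
              simp only [mem_insert, mem_singleton] at ha
              exact ⟨fun h => ha.2 (Or.inr h), fun h => ha.2 (Or.inl h), hs.1 ha.1⟩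
            · intro a ha b hb
              rw [mem_sdiff] at ha hb
              exact hs.2 a ha.1 b hb.1
        · intro s hs t ht h
          simp only [Prod.mk.injEq] at h
          have hs' : s = s \ {x, y} ∪ s ∩ {x, y} := (Finset.sdiff_union_inter s {x, y}).symm
          have ht' : t = t \ {x, y} ∪ t ∩ {x, y} := (Finset.sdiff_union_inter t {x, y}).symm
          rw [hs', ht', h.1, h.2]
      have h3a : ({{x}, {y}} : Finset (Finset V)).card ≤ 2 :=
        le_trans (Finset.card_insert_le _ _) (by simp)
      have hcard3 : ({∅, {x}, {y}} : Finset (Finset V)).card ≤ 3 :=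
        le_trans (Finset.card_insert_le _ _) (by omega)
      have hprod : (Fset G A).card ≤ 3 * (Fset G B).card := by
        calc (Fset G A).card ≤ _ := hinj
          _ = ({∅, {x}, {y}} : Finset (Finset V)).card * (Fset G B).card :=
              Finset.card_product _ _
          _ ≤ 3 * (Fset G B).card := by gcongr
      have hxB : x ∉ B := by rw [hmemB]; tauto
      have hyB : y ∉ B := by rw [hmemB]; tauto
      have hcardB : B.card = A.card - 2 := by
        rw [hB, card_erase_of_mem (mem_erase.mpr ⟨hyx, hyA⟩), card_erase_of_mem hxA]
        omega
      by_cases hBne : B.Nonempty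
      · have h2B : 2 ≤ B.card := two_le_of_P G hPB hBne
        have hBss : B ⊂ A := by
          refine Finset.ssubset_iff_of_subset ?_ |>.mpr ⟨x, hxA, hxB⟩
          intro a ha; exact ((hmemB a).mp ha).2.2
        have hIHB : (Fset G B).card ≤ 2 ^ (B.card - 1) + 1 := IH _ hBss hPB h2B
        have h4 : 4 ≤ A.card := by omega
        have hk : 1 ≤ A.card - 3 := by omega
        have hpw : 2 ≤ 2 ^ (A.card - 3) :=
          le_trans (by norm_num) (Nat.pow_le_pow_right (by norm_num) hk)
        calc (Fset G A).card ≤ 3 * (Fset G B).card := hprod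
          _ ≤ 3 * (2 ^ (B.card - 1) + 1) := by gcongr
          _ = 3 * 2 ^ (A.card - 3) + 3 := by
              have eB : B.card - 1 = A.card - 3 := by omega
              rw [eB]; ring
          _ ≤ 4 * 2 ^ (A.card - 3) + 1 := by omega
          _ = 2 ^ (A.card - 1) + 1 := by
              have : A.card - 1 = (A.card - 3) + 2 := by omega
              rw [this, pow_add]
              ring
      · -- B = ∅, so A = {x, y} and |A| = 2
        rw [Finset.not_nonempty_iff_eq_empty] at hBne
        have hA2 : A.card = 2 := by
          have := hcardB
          rw [hBne] at this
          simp at this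
          omega
        have hF0 : (Fset G B).card ≤ 1 := by
          rw [hBne]
          apply Finset.card_le_one.mpr
          intro a ha b hb
          rw [mem_Fset] at ha hb
          have ha' : a = ∅ := Finset.subset_empty.mp ha.1
          have hb' : b = ∅ := Finset.subset_empty.mp hb.1
          rw [ha', hb']
        calc (Fset G A).card ≤ 3 * (Fset G B).card := hprod
          _ ≤ 3 := by omega
          _ ≤ 2 ^ (A.card - 1) + 1 := by rw [hA2]; norm_num
      
end Aux

/-- Galvin: for `n ≥ 2`, every `n`-vertex graph with minimum degree at least 1 has at most
`2^(n-1) + 1 = i(K_{1,n-1})` independent sets in total. -/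
theorem stmt_0 {V : Type*} [Fintype V] (G : SimpleGraph V) (n : ℕ)
    (hn : Fintype.card V = n) (h2 : 2 ≤ n)
    (hmin : ∀ v, 1 ≤ gdeg G v) :
    indepAll G ≤ 2 ^ (n - 1) + 1 := by
  classical
  have hP : ∀ v ∈ (Finset.univ : Finset V), ∃ w ∈ (Finset.univ : Finset V), G.Adj v w := by
    intro v _
    have h1 : (G.neighborSet v).ncard ≠ 0 := by
      have := hmin v
      unfold gdeg at this
      omega
    obtain ⟨w, hw⟩ := Set.nonempty_of_ncard_ne_zero h1
    exact ⟨w, Finset.mem_univ w, hw⟩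
  have hcard : (Finset.univ : Finset V).card = n := by
    rw [Finset.card_univ, hn]
  have key := main_bound G Finset.univ hP (by omega)
  have heq : indepAll G = (Fset G Finset.univ).card := by
    unfold indepAll Fset
    rw [Nat.card_eq_fintype_card, Fintype.card_subtype]
    congr 1
    ext s
    simp
  rw [heq, hcard] at *
  exact key
end

section
/- Let δ ≥ 2, n ≥ 4δ², and let G be a graph on n vertices with minimum degree at least δ. Then the total number of independent sets in G satisfies i(G) ≤ i(K_{δ,n-δ}) = 2^{n-δ} + 2^{δ} − 1. -/
open SimpleGraph

namespace Galvin

open Finset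

set_option linter.unusedSectionVars false

variable {V : Type*} [Fintype V] [DecidableEq V] (G : SimpleGraph V) [DecidableRel G.Adj]

/-- Independence of a finite vertex set. -/
def Ind (A : Finset V) : Prop := ∀ u ∈ A, ∀ v ∈ A, ¬ G.Adj u v

/-- The set of vertices of `M` adjacent to some vertex of `A`. -/
def nbr (M A : Finset V) : Finset V := M.filter fun m => ∃ a ∈ A, G.Adj a m

instance (A : Finset V) : Decidable (Ind G A) := by unfold Ind; infer_instance

/-- Weight: an upper bound for the number of independent sets meeting `Mᶜ` exactly in `A`. -/
def w (M A : Finset V) : ℕ :=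
  if Ind G A then 2 ^ (M.card - (nbr G M A).card) else 0

variable {G}

lemma nbr_subset (M A : Finset V) : nbr G M A ⊆ M := filter_subset _ _

lemma card_nbr_le (M A : Finset V) : (nbr G M A).card ≤ M.card :=
  card_le_card (nbr_subset M A)

lemma nbr_mono (M : Finset V) {A A' : Finset V} (h : A ⊆ A') : nbr G M A ⊆ nbr G M A' := by
  intro m hm
  simp only [nbr, mem_filter] at hm ⊢
  obtain ⟨hmM, a, haA, hadj⟩ := hm
  exact ⟨hmM, a, h haA, hadj⟩

/-- Ceiling division. -/
def cdiv (a q : ℕ) : ℕ := (a + q - 1) / q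

lemma cdiv_le {a q d : ℕ} (hq : 0 < q) (h : a ≤ q * d) : cdiv a q ≤ d := by
  rw [cdiv, Nat.div_le_iff_le_mul_add_pred hq]
  omega

lemma le_cdiv {a q t : ℕ} (hq : 0 < q) (h : t * q < a + q) : t ≤ cdiv a q := by
  rw [cdiv, Nat.le_div_iff_mul_le hq]
  omega

lemma cdiv_mul_self {q a : ℕ} (hq : 0 < q) : cdiv (q * a) q = a := by
  refine le_antisymm (cdiv_le hq le_rfl) (le_cdiv hq ?_)
  rw [mul_comm]
  omega

lemma two_geom (n : ℕ) : ∑ i ∈ range n, 2 ^ i = 2 ^ n - 1 := by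
  induction n with
  | zero => simp
  | succ n ih =>
    rw [Finset.sum_range_succ, ih]
    have h1 := Nat.one_le_two_pow (n := n)
    have h2 : 2 ^ (n + 1) = 2 * 2 ^ n := by ring
    omega

lemma powsum {α : Type*} [DecidableEq α] (s : Finset α) :
    ∑ A ∈ s.powerset, 2 ^ (s.card - A.card) = 3 ^ s.card := by
  induction s using Finset.induction with
  | empty => simp
  | @insert x s hx ih =>
    rw [Finset.sum_powerset_insert hx, Finset.card_insert_of_notMem hx]
    have h1 : ∑ A ∈ s.powerset, 2 ^ (s.card + 1 - A.card) = 2 * 3 ^ s.card := by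
      rw [← ih, Finset.mul_sum]
      refine Finset.sum_congr rfl fun A hA => ?_
      have : A.card ≤ s.card := card_le_card (mem_powerset.mp hA)
      rw [← pow_succ']
      congr 1
      omega
    have h2 : ∑ A ∈ s.powerset, 2 ^ (s.card + 1 - (insert x A).card) = 3 ^ s.card := by
      rw [← ih]
      refine Finset.sum_congr rfl fun A hA => ?_
      have hxA : x ∉ A := fun h => hx (mem_powerset.mp hA h)
      rw [card_insert_of_notMem hxA]
      congr 1
      have : A.card ≤ s.card := card_le_card (mem_powerset.mp hA)
      omega
    rw [h1, h2]
    ring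

/-- The number of independent sets is at most the sum of the weights. -/
lemma counting {M : Finset V} :
    indepAll G ≤ ∑ A ∈ (Finset.univ \ M).powerset, w G M A := by
  classical
  have h0 : indepAll G = (univ.filter (fun s : Finset V => Ind G s)).card := by
    rw [indepAll, Nat.card_eq_fintype_card]
    convert Fintype.card_subtype _
    · exact Iff.rfl
    · infer_instance
  rw [h0]
  rw [Finset.card_eq_sum_card_fiberwise
    (f := fun I : Finset V => I ∩ (Finset.univ \ M)) (t := (Finset.univ \ M).powerset)
    (fun I _ => mem_powerset.mpr (inter_subset_right))]
  refine Finset.sum_le_sum fun A hA => ?_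
  by_cases hind : Ind G A
  · rw [w, if_pos hind]
    have hle : ((univ.filter fun s => Ind G s).filter fun I => I ∩ (univ \ M) = A).card
        ≤ ((M \ nbr G M A).powerset).card := by
      refine Finset.card_le_card_of_injOn (fun I => I ∩ M) ?_ ?_
      · intro I hI
        simp only [mem_coe, mem_filter, mem_univ, true_and] at hI
        obtain ⟨hIind, hIA⟩ := hI
        simp only [mem_coe, mem_powerset]
        intro m hm
        rw [mem_inter] at hm
        rw [mem_sdiff]
        refine ⟨hm.2, fun hmem => ?_⟩
        rw [nbr, mem_filter] at hmem
        obtain ⟨_, a, haA, hadj⟩ := hmem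
        have haI : a ∈ I := by
          have : a ∈ I ∩ (univ \ M) := hIA ▸ haA
          exact (mem_inter.mp this).1
        exact hIind a haI m hm.1 hadj
      · intro I hI I' hI' heq
        simp only [coe_filter, Set.mem_setOf_eq] at hI hI'
        obtain ⟨_, hIA⟩ := hI
        obtain ⟨_, hI'A⟩ := hI'
        ext v
        by_cases hvM : v ∈ M
        · constructor
          · intro hv
            have h1 : v ∈ I ∩ M := mem_inter.mpr ⟨hv, hvM⟩
            have h2 : I ∩ M = I' ∩ M := heq
            rw [h2] at h1
            exact (mem_inter.mp h1).1
          · intro hv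
            have h1 : v ∈ I' ∩ M := mem_inter.mpr ⟨hv, hvM⟩
            have h2 : I ∩ M = I' ∩ M := heq
            rw [← h2] at h1
            exact (mem_inter.mp h1).1
        · have hvB : v ∈ univ \ M := mem_sdiff.mpr ⟨mem_univ v, hvM⟩
          constructor
          · intro hv
            have : v ∈ I ∩ (univ \ M) := mem_inter.mpr ⟨hv, hvB⟩
            rw [hIA, ← hI'A] at this
            exact (mem_inter.mp this).1
          · intro hv
            have : v ∈ I' ∩ (univ \ M) := mem_inter.mpr ⟨hv, hvB⟩
            rw [hI'A, ← hIA] at this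
            exact (mem_inter.mp this).1
    refine hle.trans ?_
    rw [card_powerset, card_sdiff_of_subset (nbr_subset M A)]
  · rw [w, if_neg hind]
    rw [Nat.le_zero, Finset.card_eq_zero]
    rw [Finset.eq_empty_iff_forall_notMem]
    intro I hI
    simp only [mem_filter, mem_univ, true_and] at hI
    obtain ⟨hIind, hIA⟩ := hI
    refine hind fun u hu v hv => hIind u ?_ v ?_
    · have : u ∈ I ∩ (univ \ M) := hIA ▸ hu
      exact (mem_inter.mp this).1
    · have : v ∈ I ∩ (univ \ M) := hIA ▸ hv
      exact (mem_inter.mp this).1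

/-- Key consequence of maximality: an independent set outside `M` has at least as many
neighbours in `M` as its own size. -/
lemma card_le_card_nbr {M : Finset V} (hM : Ind G M)
    (hmax : ∀ I : Finset V, Ind G I → I.card ≤ M.card)
    {A : Finset V} (hA : Ind G A) (hAB : A ⊆ Finset.univ \ M) :
    A.card ≤ (nbr G M A).card := by
  set I : Finset V := (M \ nbr G M A) ∪ A with hI
  have hdisj : Disjoint (M \ nbr G M A) A := by
    rw [Finset.disjoint_left]
    intro x hx hxA
    exact (mem_sdiff.mp (hAB hxA)).2 (mem_sdiff.mp hx).1
  have hIind : Ind G I := by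
    intro u hu v hv
    rw [hI, mem_union] at hu hv
    rcases hu with hu | hu <;> rcases hv with hv | hv
    · exact hM u (mem_sdiff.mp hu).1 v (mem_sdiff.mp hv).1
    · intro hadj
      have hu' := mem_sdiff.mp hu
      exact hu'.2 (mem_filter.mpr ⟨hu'.1, v, hv, hadj.symm⟩)
    · intro hadj
      have hv' := mem_sdiff.mp hv
      exact hv'.2 (mem_filter.mpr ⟨hv'.1, u, hu, hadj⟩)
    · exact hA u hu v hv
  have hcard := hmax I hIind
  rw [hI, Finset.card_union_of_disjoint hdisj, card_sdiff_of_subset (nbr_subset M A)] at hcard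
  have := card_nbr_le (G := G) M A
  omega

/-- Every vertex of `M` has at least `δ` neighbours outside `M`. -/
lemma deg_out {δ : ℕ} {M : Finset V} (hM : Ind G M) (hmin : ∀ v, δ ≤ gdeg G v) {m : V}
    (hm : m ∈ M) :
    δ ≤ ((Finset.univ \ M).filter (fun b => G.Adj m b)).card := by
  have hset : G.neighborSet m = ↑((Finset.univ \ M).filter (fun b => G.Adj m b)) := by
    ext v
    simp only [mem_neighborSet, coe_filter, Set.mem_setOf_eq, mem_sdiff, mem_univ, true_and]
    exact ⟨fun h => ⟨fun hvM => hM m hm v hvM h, h⟩, fun h => h.2⟩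
  have := hmin m
  rw [gdeg, hset, Set.ncard_coe_finset] at this
  exact this

/-- Degree-sum double counting. -/
lemma degsum {δ : ℕ} {M : Finset V} (hM : Ind G M) (hmin : ∀ v, δ ≤ gdeg G v) :
    δ * M.card ≤ ∑ b ∈ Finset.univ \ M, (nbr G M {b}).card := by
  have key : ∀ b : V, nbr G M {b} = M.filter (fun m => G.Adj m b) := by
    intro b
    rw [nbr]
    refine filter_congr fun m _ => ?_
    simp only [mem_singleton, exists_eq_left]
    exact ⟨fun h => h.symm, fun h => h.symm⟩
  calc δ * M.card = ∑ _m ∈ M, δ := by rw [sum_const, smul_eq_mul, mul_comm]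
    _ ≤ ∑ m ∈ M, ((Finset.univ \ M).filter (fun b => G.Adj m b)).card :=
        Finset.sum_le_sum fun m hm => deg_out hM hmin hm
    _ = ∑ m ∈ M, ∑ b ∈ Finset.univ \ M, (if G.Adj m b then 1 else 0) := by
        refine Finset.sum_congr rfl fun m _ => ?_
        rw [Finset.card_filter]
    _ = ∑ b ∈ Finset.univ \ M, ∑ m ∈ M, (if G.Adj m b then 1 else 0) := Finset.sum_comm
    _ = ∑ b ∈ Finset.univ \ M, (nbr G M {b}).card := by
        refine Finset.sum_congr rfl fun b _ => ?_
        rw [key b, Finset.card_filter]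

/-- The peeling bound: repeatedly remove a vertex of maximum `M`-degree. -/
lemma peel {M : Finset V} (hM : Ind G M) (hmax : ∀ I : Finset V, Ind G I → I.card ≤ M.card) :
    ∀ (k : ℕ) (P : Finset V), P ⊆ Finset.univ \ M → k ≤ P.card → P.card ≤ M.card →
      k * M.card ≤ ∑ b ∈ P, (nbr G M {b}).card →
      ∑ A ∈ P.powerset, w G M A ≤
        2 ^ (M.card + k - P.card) * 3 ^ (P.card - k) +
        ∑ j ∈ range k,
          2 ^ ((P.card - j - 1) + (M.card - cdiv ((k - j) * M.card) (P.card - j))) := by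
  intro k
  induction k with
  | zero =>
    intro P hPB hk hPM _
    simp only [range_zero, sum_empty, add_zero, Nat.sub_zero, Nat.add_zero]
    calc ∑ A ∈ P.powerset, w G M A ≤ ∑ A ∈ P.powerset, 2 ^ (M.card - A.card) := by
          refine Finset.sum_le_sum fun A hA => ?_
          rw [w]
          split_ifs with hind
          · refine Nat.pow_le_pow_right (by norm_num) ?_
            have h1 : A.card ≤ (nbr G M A).card :=
              card_le_card_nbr hM hmax hind ((mem_powerset.mp hA).trans hPB)
            omega
          · exact Nat.zero_le _
      _ = ∑ A ∈ P.powerset, 2 ^ (M.card - P.card) * 2 ^ (P.card - A.card) := by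
          refine Finset.sum_congr rfl fun A hA => ?_
          rw [← pow_add]
          congr 1
          have : A.card ≤ P.card := card_le_card (mem_powerset.mp hA)
          omega
      _ = 2 ^ (M.card - P.card) * 3 ^ P.card := by rw [← Finset.mul_sum, powsum]
  | succ k ih =>
    intro P hPB hk hPM hsum
    have hP0 : P.Nonempty := card_pos.mp (by omega)
    obtain ⟨b, hbP, hbmax⟩ := P.exists_max_image (fun b => (nbr G M {b}).card) hP0
    set p := P.card with hp
    set d := (nbr G M {b}).card with hd
    have hp0 : 0 < p := by omega
    have hsum_le : ∑ b' ∈ P, (nbr G M {b'}).card ≤ p * d := by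
      rw [hp, ← smul_eq_mul]
      exact Finset.sum_le_card_nsmul P _ d fun b' hb' => hbmax b' hb'
    have hdc : cdiv ((k + 1) * M.card) p ≤ d := cdiv_le hp0 (le_trans hsum (by omega))
    have hdM : d ≤ M.card := card_nbr_le M {b}
    set P' := P.erase b with hP'
    have hbP' : b ∉ P' := notMem_erase b P
    have hins : insert b P' = P := insert_erase hbP
    have hcard' : P'.card = p - 1 := by rw [hP', card_erase_of_mem hbP]
    have hsum' : k * M.card ≤ ∑ b' ∈ P', (nbr G M {b'}).card := by
      have hseq : ∑ x ∈ P', (nbr G M {x}).card + d = ∑ x ∈ P, (nbr G M {x}).card :=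
        Finset.sum_erase_add P _ hbP
      have hx : (k + 1) * M.card = k * M.card + M.card := by ring
      omega
    have h1 := ih P' (fun x hx => hPB (erase_subset b P hx)) (by omega) (by omega) hsum'
    rw [hcard'] at h1
    have h2 : ∑ A ∈ P'.powerset, w G M (insert b A) ≤ 2 ^ ((p - 1) + (M.card - d)) := by
      calc ∑ A ∈ P'.powerset, w G M (insert b A) ≤ ∑ _A ∈ P'.powerset, 2 ^ (M.card - d) := by
            refine Finset.sum_le_sum fun A hA => ?_
            rw [w]
            split_ifs with hind
            · refine Nat.pow_le_pow_right (by norm_num) ?_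
              have : nbr G M {b} ⊆ nbr G M (insert b A) :=
                nbr_mono M (by simp)
              have := card_le_card this
              omega
            · exact Nat.zero_le _
        _ = 2 ^ ((p - 1) + (M.card - d)) := by
            rw [Finset.sum_const, card_powerset, hcard', smul_eq_mul, ← pow_add]
    rw [← hins, Finset.sum_powerset_insert hbP']
    have hfirst : 2 ^ (M.card + k - (p - 1)) * 3 ^ (p - 1 - k)
        = 2 ^ (M.card + (k + 1) - p) * 3 ^ (p - (k + 1)) := by
      congr 1
      · congr 1
        omega
      · congr 1
        omega
    have hsums : ∑ j ∈ range k,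
          2 ^ ((p - 1 - j - 1) + (M.card - cdiv ((k - j) * M.card) (p - 1 - j)))
        = ∑ j ∈ range k,
          2 ^ ((p - (j + 1) - 1) + (M.card - cdiv ((k + 1 - (j + 1)) * M.card) (p - (j + 1)))) := by
      refine Finset.sum_congr rfl fun j hj => ?_
      have hjk : j < k := mem_range.mp hj
      congr 2
      · omega
      · congr 2
        · congr 1
          omega
        · omega
    have htail : ∑ j ∈ range (k + 1),
          2 ^ ((p - j - 1) + (M.card - cdiv ((k + 1 - j) * M.card) (p - j)))
        = (∑ j ∈ range k,
            2 ^ ((p - (j + 1) - 1) + (M.card - cdiv ((k + 1 - (j + 1)) * M.card) (p - (j + 1)))))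
          + 2 ^ ((p - 0 - 1) + (M.card - cdiv ((k + 1 - 0) * M.card) (p - 0))) := by
      rw [Finset.sum_range_succ']
    have hlast : 2 ^ ((p - 1) + (M.card - d))
        ≤ 2 ^ ((p - 0 - 1) + (M.card - cdiv ((k + 1 - 0) * M.card) (p - 0))) := by
      simp only [Nat.sub_zero]
      exact Nat.pow_le_pow_right (by norm_num) (by omega)
    calc ∑ A ∈ P'.powerset, w G M A + ∑ A ∈ P'.powerset, w G M (insert b A)
        ≤ (2 ^ (M.card + k - (p - 1)) * 3 ^ (p - 1 - k)
            + ∑ j ∈ range k,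
              2 ^ ((p - 1 - j - 1) + (M.card - cdiv ((k - j) * M.card) (p - 1 - j))))
          + 2 ^ ((p - 1) + (M.card - d)) := Nat.add_le_add h1 h2
      _ ≤ 2 ^ (M.card + (k + 1) - p) * 3 ^ (p - (k + 1)) +
          ∑ j ∈ range (k + 1),
            2 ^ ((p - j - 1) + (M.card - cdiv ((k + 1 - j) * M.card) (p - j))) := by
          rw [htail, hfirst, hsums]
          omega

lemma pow43 {δ β : ℕ} (h : 3 * δ ≤ β) : 2 ^ δ * 3 ^ β ≤ 2 ^ (2 * β) := by
  have h1 : (3:ℕ) ^ β = 27 ^ δ * 3 ^ (β - 3 * δ) := by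
    rw [show (27:ℕ) = 3 ^ 3 from rfl, ← pow_mul, ← pow_add]
    congr 1
    omega
  have h2 : (2:ℕ) ^ δ * (27 ^ δ * 3 ^ (β - 3 * δ)) = 54 ^ δ * 3 ^ (β - 3 * δ) := by
    rw [← mul_assoc, ← mul_pow]
    norm_num
  have h3 : (54:ℕ) ^ δ ≤ 64 ^ δ := Nat.pow_le_pow_left (by norm_num) δ
  have h4 : (3:ℕ) ^ (β - 3 * δ) ≤ 4 ^ (β - 3 * δ) := Nat.pow_le_pow_left (by norm_num) _
  have h5 : (64:ℕ) ^ δ * 4 ^ (β - 3 * δ) = 2 ^ (2 * β) := by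
    rw [show (64:ℕ) = 2 ^ 6 from rfl, show (4:ℕ) = 2 ^ 2 from rfl, ← pow_mul, ← pow_mul,
      ← pow_add]
    congr 1
    omega
  calc 2 ^ δ * 3 ^ β = 54 ^ δ * 3 ^ (β - 3 * δ) := by rw [h1, h2]
    _ ≤ 64 ^ δ * 4 ^ (β - 3 * δ) := Nat.mul_le_mul h3 h4
    _ = 2 ^ (2 * β) := h5

lemma key_arith {δ β α m : ℕ} (hδ : 2 ≤ δ) (hβ1 : δ + 1 ≤ β) (hβ2 : β ≤ 3 * δ - 1)
    (hα : 4 * δ ^ 2 ≤ α + β) (hm1 : 1 ≤ m) (hm2 : m ≤ δ) :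
    (δ + m - 1) * (β - δ + m) + 1 ≤ m * α := by
  obtain ⟨d, rfl⟩ : ∃ d, δ = d + 2 := ⟨δ - 2, by omega⟩
  obtain ⟨s, rfl⟩ : ∃ s, β = (d + 2) + s + 1 := ⟨β - (d + 2) - 1, by omega⟩
  obtain ⟨e, rfl⟩ : ∃ e, m = e + 1 := ⟨m - 1, by omega⟩
  have h1 : (d + 2) + (e + 1) - 1 = d + e + 2 := by omega
  have h2 : (d + 2) + s + 1 - (d + 2) + (e + 1) = s + e + 2 := by omega
  rw [h1, h2]
  have hs : s ≤ 2 * d + 2 := by omega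
  have he : e ≤ d + 1 := by omega
  have hα' : 4 * d ^ 2 + 13 * d + 13 ≤ α + s := by nlinarith
  nlinarith [Nat.mul_le_mul he hs, sq_nonneg (d + e)]

end Galvin

/-- Galvin: for `δ ≥ 2` and `n ≥ 4δ²`, every `n`-vertex graph with minimum degree at least
`δ` has at most `2^(n-δ) + 2^δ - 1 = i(K_{δ,n-δ})` independent sets in total. -/
theorem stmt_1 {V : Type*} [Fintype V] (G : SimpleGraph V) (δ n : ℕ)
    (hδ : 2 ≤ δ) (hn : Fintype.card V = n) (hbig : 4 * δ ^ 2 ≤ n)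
    (hmin : ∀ v, δ ≤ gdeg G v) :
    indepAll G ≤ 2 ^ (n - δ) + 2 ^ δ - 1 := by
  classical
  open Finset in
  -- a maximum independent set
  have hne : ((Finset.univ : Finset (Finset V)).filter (fun s : Finset V => Galvin.Ind G s)).Nonempty :=
    ⟨∅, Finset.mem_filter.mpr ⟨Finset.mem_univ _, by simp [Galvin.Ind]⟩⟩
  obtain ⟨M, hMmem, hMmax⟩ := Finset.exists_max_image _ Finset.card hne
  have hM : Galvin.Ind G M := (Finset.mem_filter.mp hMmem).2
  have hmax : ∀ I : Finset V, Galvin.Ind G I → I.card ≤ M.card := fun I hI =>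
    hMmax I (Finset.mem_filter.mpr ⟨Finset.mem_univ I, hI⟩)
  set α := M.card with hα
  set B := (Finset.univ : Finset V) \ M with hB
  set β := B.card with hβ
  have hαβ : α + β = n := by
    have h1 : β = (Finset.univ : Finset V).card - α :=
      by rw [hβ, hB, Finset.card_sdiff_of_subset (Finset.subset_univ M)]
    have h2 : α ≤ (Finset.univ : Finset V).card := Finset.card_le_univ M
    rw [Finset.card_univ, hn] at h1 h2
    omega
  have hn16 : 16 ≤ n := le_trans (by nlinarith) hbig
  have hcnt : indepAll G ≤ ∑ A ∈ B.powerset, Galvin.w G M A := Galvin.counting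
  have hdeg : δ * α ≤ ∑ b ∈ B, (Galvin.nbr G M {b}).card := Galvin.degsum hM hmin
  have h2pos : (1:ℕ) ≤ 2 ^ δ := Nat.one_le_two_pow
  -- δ ≤ β
  have hβδ : δ ≤ β := by
    have hMne : M.Nonempty := by
      have hVne : Nonempty V := by
        rw [← Fintype.card_pos_iff]
        omega
      obtain ⟨v⟩ := hVne
      have hsing : Galvin.Ind G {v} := by
        intro a ha b hb
        rw [Finset.mem_singleton] at ha hb
        rw [ha, hb]
        exact G.loopless.irrefl v
      have := hmax {v} hsing
      rw [Finset.card_singleton] at this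
      exact Finset.card_pos.mp (by omega)
    obtain ⟨m, hm⟩ := hMne
    calc δ ≤ ((Finset.univ \ M).filter (fun b => G.Adj m b)).card := Galvin.deg_out hM hmin hm
      _ ≤ β := by rw [hβ, hB]; exact Finset.card_le_card (Finset.filter_subset _ _)
  rcases le_or_gt (3 * δ) β with hc | hc
  · -- Case 1 : β ≥ 3δ; crude bound (3/2)^β suffices
    have hub : ∀ A ∈ B.powerset, 2 ^ β * Galvin.w G M A ≤ 2 ^ α * 2 ^ (β - A.card) := by
      intro A hA
      rw [Galvin.w]
      split_ifs with hind
      · have hAn : A.card ≤ (Galvin.nbr G M A).card :=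
          Galvin.card_le_card_nbr hM hmax hind (by rw [← hB]; exact Finset.mem_powerset.mp hA)
        have hnα : (Galvin.nbr G M A).card ≤ α := Galvin.card_nbr_le M A
        have hAβ : A.card ≤ β := Finset.card_le_card (Finset.mem_powerset.mp hA)
        rw [← pow_add, ← pow_add]
        exact Nat.pow_le_pow_right (by norm_num) (by omega)
      · simp
    have h1 : 2 ^ β * ∑ A ∈ B.powerset, Galvin.w G M A ≤ 2 ^ α * 3 ^ β := by
      rw [Finset.mul_sum]
      calc ∑ A ∈ B.powerset, 2 ^ β * Galvin.w G M A
          ≤ ∑ A ∈ B.powerset, 2 ^ α * 2 ^ (β - A.card) := Finset.sum_le_sum hub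
        _ = 2 ^ α * 3 ^ β := by rw [← Finset.mul_sum, Galvin.powsum]
    have h2 : 2 ^ δ * (2 ^ α * 3 ^ β) ≤ 2 ^ δ * (2 ^ β * 2 ^ (α + β - δ)) := by
      calc 2 ^ δ * (2 ^ α * 3 ^ β) = 2 ^ α * (2 ^ δ * 3 ^ β) := by ring
        _ ≤ 2 ^ α * 2 ^ (2 * β) := Nat.mul_le_mul_left _ (Galvin.pow43 hc)
        _ = 2 ^ δ * (2 ^ β * 2 ^ (α + β - δ)) := by
            rw [← pow_add, ← pow_add, ← pow_add]
            congr 1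
            omega
    have h3 : 2 ^ α * 3 ^ β ≤ 2 ^ β * 2 ^ (α + β - δ) :=
      Nat.le_of_mul_le_mul_left h2 (by positivity)
    have h4 : ∑ A ∈ B.powerset, Galvin.w G M A ≤ 2 ^ (α + β - δ) :=
      Nat.le_of_mul_le_mul_left (h1.trans h3) (by positivity)
    have h5 : α + β - δ = n - δ := by omega
    rw [h5] at h4
    have := hcnt.trans h4
    omega
  · -- Case 2 : δ ≤ β ≤ 3δ - 1; peeling bound
    have hβα : β ≤ α := by nlinarith
    have hpeel := Galvin.peel hM hmax δ B (by rw [hB]) hβδ hβα hdeg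
    rcases eq_or_lt_of_le hβδ with heq | hlt
    · -- β = δ : the extremal case
      have hterm : ∀ j ∈ Finset.range δ,
          2 ^ ((β - j - 1) + (α - Galvin.cdiv ((δ - j) * α) (β - j))) = 2 ^ (δ - 1 - j) := by
        intro j hj
        have hj' : j < δ := Finset.mem_range.mp hj
        have hq : β - j = δ - j := by omega
        rw [hq, Galvin.cdiv_mul_self (by omega : 0 < δ - j)]
        congr 1
        omega
      have hsum : ∑ j ∈ Finset.range δ,
          2 ^ ((β - j - 1) + (α - Galvin.cdiv ((δ - j) * α) (β - j))) = 2 ^ δ - 1 := by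
        have hrefl := Finset.sum_range_reflect (fun i => (2:ℕ) ^ i) δ
        rw [Finset.sum_congr rfl hterm, hrefl, Galvin.two_geom]
      have hfirst : 2 ^ (α + δ - β) * 3 ^ (β - δ) = 2 ^ α := by
        rw [← heq]
        simp
      rw [hsum, hfirst] at hpeel
      have hnδ : n - δ = α := by omega
      rw [hnδ]
      have := hcnt.trans hpeel
      omega
    · -- δ < β
      set r := β - δ with hr
      have hr1 : 1 ≤ r := by omega
      have hα2δ : 2 * δ ≤ α := by nlinarith
      have h4δ : 4 * δ ^ 2 ≤ α + β := by omega
      have hterm : ∀ j ∈ Finset.range δ,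
          2 ^ ((β - j - 1) + (α - Galvin.cdiv ((δ - j) * α) (β - j)))
            ≤ 2 ^ (α + r - δ - 1) := by
        intro j hj
        have hj' : j < δ := Finset.mem_range.mp hj
        have hqpos : 0 < β - j := by omega
        have hkey := Galvin.key_arith hδ (by omega : δ + 1 ≤ β) (by omega : β ≤ 3 * δ - 1)
          h4δ (by omega : 1 ≤ δ - j) (by omega : δ - j ≤ δ)
        have hcd : 2 * δ - j ≤ Galvin.cdiv ((δ - j) * α) (β - j) := by
          refine Galvin.le_cdiv hqpos ?_
          have hexp : (2 * δ - j) * (β - j) = (2 * δ - j - 1) * (β - j) + (β - j) := by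
            have h5 : 2 * δ - j - 1 + 1 = 2 * δ - j := by omega
            calc (2 * δ - j) * (β - j) = (2 * δ - j - 1 + 1) * (β - j) := by rw [h5]
              _ = (2 * δ - j - 1) * (β - j) + (β - j) := by ring
          have hkey' : (2 * δ - j - 1) * (β - j) + 1 ≤ (δ - j) * α := by
            have e1 : δ + (δ - j) - 1 = 2 * δ - j - 1 := by omega
            have e2 : β - δ + (δ - j) = β - j := by omega
            rw [e1, e2] at hkey
            exact hkey
          omega
        refine Nat.pow_le_pow_right (by norm_num) ?_
        have hcdα : Galvin.cdiv ((δ - j) * α) (β - j) ≤ α ∨ True := Or.inr trivial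
        omega
      have hsum : ∑ j ∈ Finset.range δ,
          2 ^ ((β - j - 1) + (α - Galvin.cdiv ((δ - j) * α) (β - j)))
            ≤ δ * 2 ^ (α + r - δ - 1) := by
        calc ∑ j ∈ Finset.range δ, 2 ^ ((β - j - 1) + (α - Galvin.cdiv ((δ - j) * α) (β - j)))
            ≤ ∑ _j ∈ Finset.range δ, 2 ^ (α + r - δ - 1) := Finset.sum_le_sum hterm
          _ = δ * 2 ^ (α + r - δ - 1) := by rw [Finset.sum_const, Finset.card_range, smul_eq_mul]
      have hδpow : δ ≤ 2 ^ (δ - 1) := by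
        have := Nat.lt_two_pow_self (n := δ - 1)
        omega
      have hsum2 : δ * 2 ^ (α + r - δ - 1) ≤ 2 ^ (α + r - 2) := by
        calc δ * 2 ^ (α + r - δ - 1) ≤ 2 ^ (δ - 1) * 2 ^ (α + r - δ - 1) :=
            Nat.mul_le_mul_right _ hδpow
          _ = 2 ^ (α + r - 2) := by
            rw [← pow_add]
            congr 1
            omega
      have hfirst : 2 ^ (α + δ - β) * 3 ^ (β - δ) ≤ 3 * 2 ^ (α + r - 2) := by
        have e1 : α + δ - β = α - r := by omega
        have e2 : β - δ = r := by omega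
        rw [e1, e2]
        have h3r : (3:ℕ) ^ r ≤ 3 * 2 ^ (2 * r - 2) := by
          have : (3:ℕ) ^ r = 3 * 3 ^ (r - 1) := by
            rw [← pow_succ']
            congr 1
            omega
          rw [this]
          refine Nat.mul_le_mul_left _ ?_
          calc (3:ℕ) ^ (r - 1) ≤ 4 ^ (r - 1) := Nat.pow_le_pow_left (by norm_num) _
            _ = 2 ^ (2 * r - 2) := by
              rw [show (4:ℕ) = 2 ^ 2 from rfl, ← pow_mul]
              congr 1
              omega
        calc 2 ^ (α - r) * 3 ^ r ≤ 2 ^ (α - r) * (3 * 2 ^ (2 * r - 2)) :=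
            Nat.mul_le_mul_left _ h3r
          _ = 3 * 2 ^ (α + r - 2) := by
            rw [mul_comm (3:ℕ) _, ← mul_assoc, ← pow_add, mul_comm _ (3:ℕ)]
            congr 2
            omega
      have htot : ∑ A ∈ B.powerset, Galvin.w G M A ≤ 2 ^ (α + r) := by
        calc ∑ A ∈ B.powerset, Galvin.w G M A
            ≤ 2 ^ (α + δ - β) * 3 ^ (β - δ) + ∑ j ∈ Finset.range δ,
              2 ^ ((β - j - 1) + (α - Galvin.cdiv ((δ - j) * α) (β - j))) := hpeel
          _ ≤ 3 * 2 ^ (α + r - 2) + 2 ^ (α + r - 2) := Nat.add_le_add hfirst (hsum.trans hsum2)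
          _ = 4 * 2 ^ (α + r - 2) := by ring
          _ = 2 ^ (α + r) := by
            rw [show (4:ℕ) = 2 ^ 2 from rfl, ← pow_add]
            congr 1
            omega
      have hnδ : α + r = n - δ := by omega
      rw [hnδ] at htot
      have := hcnt.trans htot
      omega
end

section
/- Let δ ≥ 1, n ≥ 2δ, t ≥ 3, and let G be a bipartite graph on n vertices with minimum degree at least δ. Then i_t(G) ≤ i_t(K_{δ,n-δ}) = C(n-δ, t) + C(δ, t). -/
open SimpleGraph

open Finset

private lemma telescope (m k : ℕ) : ∀ s : ℕ, (m+s).choose (k+1)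
    = m.choose (k+1) + ∑ i ∈ range s, (m+i).choose k := by
  intro s
  induction s with
  | zero => simp
  | succ s ih =>
      rw [Finset.sum_range_succ, show m + (s+1) = (m+s)+1 from rfl,
        Nat.choose_succ_succ' (m+s) k, ih]
      ring

private lemma chord (m M k : ℕ) (h : m ≤ M) :
    M * m.choose (k+1) ≤ m * M.choose (k+1) := by
  rcases m with _ | m'
  · simp
  rcases M with _ | M'
  · omega
  have h1 := Nat.add_one_mul_choose_eq m' k
  have h2 := Nat.add_one_mul_choose_eq M' k
  have h3 : m'.choose k ≤ M'.choose k := Nat.choose_le_choose k (by omega)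
  apply Nat.le_of_mul_le_mul_right _ (Nat.succ_pos k)
  calc (M'+1) * (m'+1).choose (k+1) * (k+1)
      = (M'+1) * ((m'+1).choose (k+1) * (k+1)) := by ring
    _ = (M'+1) * ((m'+1) * m'.choose k) := by rw [← h1]
    _ ≤ (M'+1) * ((m'+1) * M'.choose k) := by
        exact Nat.mul_le_mul_left _ (Nat.mul_le_mul_left _ h3)
    _ = (m'+1) * ((M'+1) * M'.choose k) := by ring
    _ = (m'+1) * ((M'+1).choose (k+1) * (k+1)) := by rw [h2]
    _ = (m'+1) * (M'+1).choose (k+1) * (k+1) := by ring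

private lemma diamond (b d k : ℕ) (hd : 1 ≤ d) (hdb : d ≤ b) (hk : 1 ≤ k) :
    d * (b-2).choose k + b * (b-1-d).choose k ≤ b * (b-1).choose k := by
  rcases k with _ | k'
  · omega
  rcases Nat.eq_or_lt_of_le hdb with rfl | hlt
  · -- d = b : (b-1-d) = 0, C(0,k'+1)=0
    rw [show d - 1 - d = 0 by omega, Nat.choose_zero_succ, Nat.mul_zero, Nat.add_zero]
    exact Nat.mul_le_mul_left d (Nat.choose_le_choose (k'+1) (by omega))
  -- d < b
  set m := b - 1 - d with hm
  have hmd : m + d = b - 1 := by omega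
  have htel : (b-1).choose (k'+1) = m.choose (k'+1) + ∑ i ∈ range d, (m+i).choose k' := by
    rw [← hmd]; exact telescope m k' d
  by_cases hc : (b-2).choose (k'+1) ≤ b * m.choose k'
  · -- easy case: each term of the telescoping sum dominates
    have hsum : d * (b-2).choose (k'+1) ≤ b * ∑ i ∈ range d, (m+i).choose k' := by
      calc d * (b-2).choose (k'+1) = ∑ _i ∈ range d, (b-2).choose (k'+1) := by
            rw [Finset.sum_const, card_range, smul_eq_mul]
        _ ≤ ∑ i ∈ range d, b * (m+i).choose k' := by
            apply Finset.sum_le_sum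
            intro i _
            exact le_trans hc (Nat.mul_le_mul_left b (Nat.choose_le_choose k' (by omega)))
        _ = b * ∑ i ∈ range d, (m+i).choose k' := by rw [Finset.mul_sum]
    calc d * (b-2).choose (k'+1) + b * m.choose (k'+1)
        ≤ b * (∑ i ∈ range d, (m+i).choose k') + b * m.choose (k'+1) := by
          exact Nat.add_le_add_right hsum _
      _ = b * ((b-1).choose (k'+1)) := by rw [htel]; ring
  · push_neg at hc
    -- b * C(m,k'+1) ≤ m * C(b-2,k'+1)
    have key : b * m.choose (k'+1) ≤ m * (b-2).choose (k'+1) := by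
      have hid := Nat.choose_succ_right_eq m k'
      -- C(m,k'+1)*(k'+1) = C(m,k')*(m-k')
      apply Nat.le_of_mul_le_mul_right _ (Nat.succ_pos k')
      calc b * m.choose (k'+1) * (k'+1) = b * (m.choose (k'+1) * (k'+1)) := by ring
        _ = b * (m.choose k' * (m - k')) := by rw [hid]
        _ = (b * m.choose k') * (m - k') := by ring
        _ ≤ (b-2).choose (k'+1) * (m - k') := Nat.mul_le_mul_right _ (le_of_lt hc)
        _ ≤ (b-2).choose (k'+1) * (m * (k'+1)) := by
            apply Nat.mul_le_mul_left
            calc m - k' ≤ m := Nat.sub_le m k'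
              _ ≤ m * (k'+1) := Nat.le_mul_of_pos_right m (Nat.succ_pos k')
        _ = m * (b-2).choose (k'+1) * (k'+1) := by ring
    calc d * (b-2).choose (k'+1) + b * m.choose (k'+1)
        ≤ d * (b-2).choose (k'+1) + m * (b-2).choose (k'+1) := Nat.add_le_add_left key _
      _ = (d + m) * (b-2).choose (k'+1) := by ring
      _ = (b-1) * (b-2).choose (k'+1) := by rw [show d + m = b - 1 by omega]
      _ ≤ b * (b-1).choose (k'+1) :=
          Nat.mul_le_mul (by omega) (Nat.choose_le_choose _ (by omega))

private lemma sum_split3 (t : ℕ) (ht : 3 ≤ t) (f : ℕ → ℕ) :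
    ∑ i ∈ range (t+1), f i = f 0 + f 1 + (∑ i ∈ Ico 2 t, f i) + f t := by
  rw [Finset.sum_range_succ, Finset.range_eq_Ico,
    Finset.sum_eq_sum_Ico_succ_bot (by omega : 0 < t) f,
    Finset.sum_eq_sum_Ico_succ_bot (by omega : 1 < t) f]
  ring

private lemma sum_split2 (t : ℕ) (ht : 3 ≤ t) (f : ℕ → ℕ) :
    ∑ i ∈ range (t+1), f i = f 0 + (∑ i ∈ Ico 1 t, f i) + f t := by
  rw [Finset.sum_range_succ, Finset.range_eq_Ico,
    Finset.sum_eq_sum_Ico_succ_bot (by omega : 0 < t) f]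

private lemma vandermonde_range (D b t : ℕ) :
    (D + b).choose t = ∑ i ∈ range (t+1), D.choose i * b.choose (t-i) := by
  rw [Nat.add_choose_eq]
  exact Finset.Nat.sum_antidiagonal_eq_sum_range_succ_mk _ t

private lemma S0_bound (D d t : ℕ) (hD : 1 ≤ D) (hd : 1 ≤ d) (ht : 3 ≤ t) :
    (t-1) * ∑ j ∈ Ico 1 t, D.choose j * d.choose (t-j)
      ≤ D * d * ((D + d - 2).choose (t-2)) := by
  have hterm : ∀ j ∈ Ico 1 t, (t-1) * (D.choose j * d.choose (t-j))
      ≤ (D * d) * ((D-1).choose (j-1) * (d-1).choose (t-j-1)) := by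
    intro j hj
    rw [Finset.mem_Ico] at hj
    obtain ⟨D', rfl⟩ : ∃ D', D = D' + 1 := ⟨D - 1, by omega⟩
    obtain ⟨d', rfl⟩ : ∃ d', d = d' + 1 := ⟨d - 1, by omega⟩
    obtain ⟨j', rfl⟩ : ∃ j', j = j' + 1 := ⟨j - 1, by omega⟩
    obtain ⟨s', hs⟩ : ∃ s', t - (j'+1) = s' + 1 := ⟨t - j' - 2, by omega⟩
    rw [hs]
    simp only [Nat.add_sub_cancel]
    have h1 := Nat.add_one_mul_choose_eq D' j'
    have h2 := Nat.add_one_mul_choose_eq d' s'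
    have hmul : (t-1) ≤ (j'+1) * (s'+1) := by
      have he : t - 1 = j' + 1 + s' := by omega
      rw [he]; nlinarith [Nat.zero_le (j' * s')]
    calc (t-1) * ((D'+1).choose (j'+1) * (d'+1).choose (s'+1))
        ≤ ((j'+1) * (s'+1)) * ((D'+1).choose (j'+1) * (d'+1).choose (s'+1)) :=
          Nat.mul_le_mul_right _ hmul
      _ = ((D'+1).choose (j'+1) * (j'+1)) * ((d'+1).choose (s'+1) * (s'+1)) := by ring
      _ = ((D'+1) * D'.choose j') * ((d'+1) * d'.choose s') := by rw [← h1, ← h2]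
      _ = ((D'+1) * (d'+1)) * (D'.choose j' * d'.choose s') := by ring
  calc (t-1) * ∑ j ∈ Ico 1 t, D.choose j * d.choose (t-j)
      = ∑ j ∈ Ico 1 t, (t-1) * (D.choose j * d.choose (t-j)) := Finset.mul_sum _ _ _
    _ ≤ ∑ j ∈ Ico 1 t, (D * d) * ((D-1).choose (j-1) * (d-1).choose (t-j-1)) :=
        Finset.sum_le_sum hterm
    _ = (D * d) * ∑ j ∈ Ico 1 t, (D-1).choose (j-1) * (d-1).choose (t-j-1) := by
        rw [Finset.mul_sum]
    _ = (D * d) * ∑ i ∈ range (t-1), (D-1).choose i * (d-1).choose (t-2-i) := by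
        congr 1
        rw [Finset.sum_Ico_eq_sum_range]
        apply Finset.sum_congr rfl
        intro i _
        congr 2 <;> omega
    _ = (D * d) * ((D + d - 2).choose (t-2)) := by
        congr 1
        have : (D + d - 2) = (D-1) + (d-1) := by omega
        rw [this, vandermonde_range]
        rw [show (t-2)+1 = t-1 by omega]
    _ = D * d * ((D + d - 2).choose (t-2)) := rfl

private lemma dagger (d D c t : ℕ) (hd : 1 ≤ d) (ht : 3 ≤ t) :
    (d+D+c) * D * ((D+c).choose (t-1))
      + (D+c) * (∑ j ∈ Ico 1 t, D.choose j * d.choose (t-j))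
      ≤ (D+c) * (D * ((d+D+c).choose (t-1))) := by
  rcases Nat.eq_zero_or_pos D with rfl | hD
  · have : ∑ j ∈ Ico 1 t, Nat.choose 0 j * d.choose (t-j) = 0 := by
      apply Finset.sum_eq_zero
      intro j hj
      rw [Finset.mem_Ico] at hj
      rw [Nat.choose_eq_zero_of_lt (by omega), Nat.zero_mul]
    simp [this]
  set b := d + D + c with hb
  apply Nat.le_of_mul_le_mul_left _ (show 0 < t-1 by omega)
  -- identities
  obtain ⟨q', hq⟩ : ∃ q', D + c = q' + 1 := ⟨D + c - 1, by omega⟩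
  obtain ⟨b', hb'⟩ : ∃ b', b = b' + 1 := ⟨b - 1, by omega⟩
  obtain ⟨k, hk⟩ : ∃ k, t - 1 = k + 1 := ⟨t - 2, by omega⟩
  have hk2 : t - 2 = k := by omega
  have id1 : (t-1) * ((D+c).choose (t-1)) = (D+c) * ((D+c-1).choose (t-2)) := by
    rw [hq, hk, hk2]
    simp only [Nat.add_sub_cancel]
    rw [Nat.add_one_mul_choose_eq q' k]
    exact mul_comm _ _
  have id2 : (t-1) * (b.choose (t-1)) = b * ((b-1).choose (t-2)) := by
    rw [hb', hk, hk2]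
    simp only [Nat.add_sub_cancel]
    rw [Nat.add_one_mul_choose_eq b' k]
    exact mul_comm _ _
  have hS0 := S0_bound D d t hD hd ht
  have hdia : d * ((b-2).choose (t-2)) + b * ((b-1-d).choose (t-2)) ≤ b * ((b-1).choose (t-2)) := by
    apply diamond b d (t-2) hd (by omega) (by omega)
  have hmono : (D + d - 2).choose (t-2) ≤ (b-2).choose (t-2) :=
    Nat.choose_le_choose _ (by omega)
  have hbd : b - 1 - d = D + c - 1 := by omega
  calc (t-1) * ((d+D+c) * D * ((D+c).choose (t-1))
        + (D+c) * (∑ j ∈ Ico 1 t, D.choose j * d.choose (t-j)))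
      = b * D * ((t-1) * ((D+c).choose (t-1)))
        + (D+c) * ((t-1) * (∑ j ∈ Ico 1 t, D.choose j * d.choose (t-j))) := by ring
    _ ≤ b * D * ((D+c) * ((D+c-1).choose (t-2))) + (D+c) * (D * d * ((D + d - 2).choose (t-2))) := by
        rw [id1]
        exact Nat.add_le_add_left (Nat.mul_le_mul_left _ hS0) _
    _ ≤ b * D * ((D+c) * ((D+c-1).choose (t-2))) + (D+c) * (D * d * ((b-2).choose (t-2))) := by
        exact Nat.add_le_add_left (Nat.mul_le_mul_left _ (Nat.mul_le_mul_left _ hmono)) _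
    _ = D * (D+c) * (b * ((b-1-d).choose (t-2)) + d * ((b-2).choose (t-2))) := by
        rw [hbd]; ring
    _ ≤ D * (D+c) * (b * ((b-1).choose (t-2))) := by
        apply Nat.mul_le_mul_left
        rw [Nat.add_comm]
        exact hdia
    _ = D * (D+c) * ((t-1) * (b.choose (t-1))) := by rw [id2]
    _ = (t-1) * ((D+c) * (D * (b.choose (t-1)))) := by ring

lemma main_arith (d D c t : ℕ) (hd : 1 ≤ d) (ht : 3 ≤ t) :
    (d+D+c) * D * ((D+c).choose (t-1))
      + (D+c) * ((∑ j ∈ Ico 2 t, D.choose j * (d+D+c).choose (t-j))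
          + (d+D).choose t + (d+D+c).choose t)
      ≤ (D+c) * ((d+D+D+c).choose t + d.choose t) := by
  have vdm1 : (d+D+D+c).choose t
      = (d+D+c).choose t + D * (d+D+c).choose (t-1)
        + (∑ j ∈ Ico 2 t, D.choose j * (d+D+c).choose (t-j)) + D.choose t := by
    rw [show d+D+D+c = D + (d+D+c) by ring, vandermonde_range,
      sum_split3 t ht (fun i => D.choose i * (d+D+c).choose (t-i))]
    simp [Nat.choose_one_right, Nat.sub_self]
  have vdm2 : (d+D).choose t
      = d.choose t + (∑ j ∈ Ico 1 t, D.choose j * d.choose (t-j)) + D.choose t := by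
    rw [show d+D = D + d by ring, vandermonde_range,
      sum_split2 t ht (fun i => D.choose i * d.choose (t-i))]
    simp [Nat.sub_self]
  have hdag := dagger d D c t hd ht
  calc (d+D+c) * D * ((D+c).choose (t-1))
      + (D+c) * ((∑ j ∈ Ico 2 t, D.choose j * (d+D+c).choose (t-j))
          + (d+D).choose t + (d+D+c).choose t)
      = ((d+D+c) * D * ((D+c).choose (t-1))
          + (D+c) * (∑ j ∈ Ico 1 t, D.choose j * d.choose (t-j)))
        + (D+c) * ((∑ j ∈ Ico 2 t, D.choose j * (d+D+c).choose (t-j))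
          + d.choose t + D.choose t + (d+D+c).choose t) := by
        rw [vdm2]; ring
    _ ≤ (D+c) * (D * ((d+D+c).choose (t-1)))
        + (D+c) * ((∑ j ∈ Ico 2 t, D.choose j * (d+D+c).choose (t-j))
          + d.choose t + D.choose t + (d+D+c).choose t) := Nat.add_le_add_right hdag _
    _ = (D+c) * ((d+D+D+c).choose t + d.choose t) := by
        rw [vdm1]; ring

open Finset
section counting
variable {V : Type*} [Fintype V] [DecidableEq V] (G : SimpleGraph V) [DecidableRel G.Adj]

theorem count_le (δ t : ℕ) (hδ : 1 ≤ δ) (ht : 3 ≤ t)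
    (X Y : Finset V) (hdisj : Disjoint X Y) (hunion : X ∪ Y = Finset.univ)
    (hX : ∀ x ∈ X, ∀ x' ∈ X, ¬ G.Adj x x')
    (hY : ∀ y ∈ Y, ∀ y' ∈ Y, ¬ G.Adj y y')
    (hdeg : ∀ v : V, δ ≤ (G.neighborFinset v).card)
    (hab : X.card ≤ Y.card) :
    indepT G t ≤ (X.card + Y.card - δ).choose t + δ.choose t := by
  have hcard : indepT G t
      = (univ.filter (fun s : Finset V => s.card = t ∧ ∀ u ∈ s, ∀ v ∈ s, ¬ G.Adj u v)).card := by
    rw [indepT, Nat.card_eq_fintype_card, Fintype.card_subtype]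
  set I := univ.filter (fun s : Finset V => s.card = t ∧ ∀ u ∈ s, ∀ v ∈ s, ¬ G.Adj u v) with hI
  rcases isEmpty_or_nonempty V with hV | hV
  · have : I = ∅ := by
      apply Finset.eq_empty_of_forall_notMem
      intro s hs
      rw [hI, Finset.mem_filter] at hs
      have h2 : s.card = t := hs.2.1
      rw [Finset.eq_empty_of_isEmpty s] at h2
      simp at h2
      omega
    rw [hcard, this]
    simp
  -- V nonempty
  set a := X.card with ha
  set b := Y.card with hb
  -- neighbors cross over
  have hNX : ∀ x ∈ X, G.neighborFinset x ⊆ Y := by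
    intro x hx y hy
    rw [SimpleGraph.mem_neighborFinset] at hy
    have hyX : y ∉ X := fun hyX => hX x hx y hyX hy
    have : y ∈ X ∪ Y := hunion ▸ Finset.mem_univ y
    rcases Finset.mem_union.mp this with h | h
    · exact absurd h hyX
    · exact h
  have hNY : ∀ y ∈ Y, G.neighborFinset y ⊆ X := by
    intro y hy x hx
    rw [SimpleGraph.mem_neighborFinset] at hx
    have hxY : x ∉ Y := fun hxY => hY y hy x hxY hx
    have : x ∈ X ∪ Y := hunion ▸ Finset.mem_univ x
    rcases Finset.mem_union.mp this with h | h
    · exact h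
    · exact absurd h hxY
  have hXne : X.Nonempty := by
    obtain ⟨v⟩ := hV
    have : v ∈ X ∪ Y := hunion ▸ Finset.mem_univ v
    rcases Finset.mem_union.mp this with h | h
    · exact ⟨v, h⟩
    · have hne : (G.neighborFinset v).Nonempty := by
        rw [← Finset.card_pos]; exact lt_of_lt_of_le hδ (hdeg v)
      obtain ⟨x, hx⟩ := hne
      exact ⟨x, hNY v h hx⟩
  have hYne : Y.Nonempty := by
    obtain ⟨x, hx⟩ := hXne
    have hne : (G.neighborFinset x).Nonempty := by
      rw [← Finset.card_pos]; exact lt_of_lt_of_le hδ (hdeg x)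
    obtain ⟨y, hy⟩ := hne
    exact ⟨y, hNX x hx hy⟩
  have hδa : δ ≤ a := by
    obtain ⟨y, hy⟩ := hYne
    exact le_trans (hdeg y) (Finset.card_le_card (hNY y hy))
  have hδb : δ ≤ b := by
    obtain ⟨x, hx⟩ := hXne
    exact le_trans (hdeg x) (Finset.card_le_card (hNX x hx))
  -- basic splitting facts
  have hsplit : ∀ s : Finset V, (s ∩ X) ∪ (s ∩ Y) = s := by
    intro s
    rw [← Finset.inter_union_distrib_left, hunion, Finset.inter_univ]
  have hcards : ∀ s : Finset V, (s ∩ X).card + (s ∩ Y).card = s.card := by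
    intro s
    rw [← Finset.card_union_of_disjoint
      (hdisj.mono (Finset.inter_subset_right) (Finset.inter_subset_right)), hsplit]
  -- fiber decomposition
  have hdecomp : I.card = ∑ j ∈ range (t+1), (I.filter (fun s => (s ∩ X).card = j)).card := by
    apply Finset.card_eq_sum_card_fiberwise
    intro s hs
    rw [Finset.mem_coe, hI, Finset.mem_filter] at hs
    rw [Finset.mem_coe, Finset.mem_range]
    have := Finset.card_le_card (Finset.inter_subset_left : s ∩ X ⊆ s)
    beta_reduce
    omega
  set M : ℕ → ℕ := fun j => (I.filter (fun s => (s ∩ X).card = j)).card with hM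
  have hIfact : ∀ s ∈ I, s.card = t ∧ ∀ u ∈ s, ∀ v ∈ s, ¬ G.Adj u v := by
    intro s hs
    rw [hI, Finset.mem_filter] at hs
    exact hs.2
  have hM0 : M 0 ≤ b.choose t := by
    simp only [hM]
    have hsub : I.filter (fun s => (s ∩ X).card = 0) ⊆ Y.powersetCard t := by
      intro s hs
      rw [Finset.mem_filter] at hs
      obtain ⟨hsI, hs0⟩ := hs
      rw [Finset.mem_powersetCard]
      constructor
      · have hempty : s ∩ X = ∅ := Finset.card_eq_zero.mp hs0
        have := hsplit s
        rw [hempty, Finset.empty_union] at this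
        rw [← this]
        exact Finset.inter_subset_right
      · exact (hIfact s hsI).1
    calc (I.filter (fun s => (s ∩ X).card = 0)).card ≤ (Y.powersetCard t).card :=
          Finset.card_le_card hsub
      _ = b.choose t := by rw [Finset.card_powersetCard]
  have hMt : M t ≤ a.choose t := by
    simp only [hM]
    have hsub : I.filter (fun s => (s ∩ X).card = t) ⊆ X.powersetCard t := by
      intro s hs
      rw [Finset.mem_filter] at hs
      obtain ⟨hsI, hst⟩ := hs
      have hct : s.card = t := (hIfact s hsI).1
      have heq : s ∩ X = s := Finset.eq_of_subset_of_card_le Finset.inter_subset_left (by omega)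
      rw [Finset.mem_powersetCard]
      exact ⟨by rw [← heq]; exact Finset.inter_subset_right, hct⟩
    calc (I.filter (fun s => (s ∩ X).card = t)).card ≤ (X.powersetCard t).card :=
          Finset.card_le_card hsub
      _ = a.choose t := by rw [Finset.card_powersetCard]
  have hMmid : ∀ j ∈ Ico 1 t, M j ≤ (a - δ).choose j * b.choose (t - j) := by
    intro j hj
    rw [Finset.mem_Ico] at hj
    simp only [hM]
    set F := I.filter (fun s => (s ∩ X).card = j) with hF
    have hfib : F.card = ∑ B ∈ Y.powersetCard (t-j), (F.filter (fun s => s ∩ Y = B)).card := by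
      apply Finset.card_eq_sum_card_fiberwise
      intro s hs
      rw [Finset.mem_coe, hF, Finset.mem_filter] at hs
      obtain ⟨hsI, hsj⟩ := hs
      rw [Finset.mem_coe, Finset.mem_powersetCard]
      refine ⟨Finset.inter_subset_right, ?_⟩
      have h1 := hcards s
      have h2 := (hIfact s hsI).1
      beta_reduce
      omega
    rw [hfib]
    have hfiber : ∀ B ∈ Y.powersetCard (t-j),
        (F.filter (fun s => s ∩ Y = B)).card ≤ (a - δ).choose j := by
      intro B hB
      rw [Finset.mem_powersetCard] at hB
      obtain ⟨hBY, hBcard⟩ := hB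
      have hBne : B.Nonempty := by
        rw [← Finset.card_pos]
        omega
      obtain ⟨y₀, hy₀B⟩ := hBne
      have hy₀Y : y₀ ∈ Y := hBY hy₀B
      have hstep : (F.filter (fun s => s ∩ Y = B)).card
          ≤ ((X \ G.neighborFinset y₀).powersetCard j).card := by
        apply Finset.card_le_card_of_injOn (fun s => s ∩ X)
        · intro s hs
          rw [Finset.mem_coe, Finset.mem_filter, hF, Finset.mem_filter] at hs
          obtain ⟨⟨hsI, hsj⟩, hsB⟩ := hs
          rw [Finset.mem_coe, Finset.mem_powersetCard]
          refine ⟨?_, hsj⟩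
          intro x hx
          rw [Finset.mem_inter] at hx
          rw [Finset.mem_sdiff]
          refine ⟨hx.2, ?_⟩
          intro hxN
          rw [SimpleGraph.mem_neighborFinset] at hxN
          have hy₀s : y₀ ∈ s := by
            have : y₀ ∈ s ∩ Y := hsB ▸ hy₀B
            exact (Finset.mem_inter.mp this).1
          exact (hIfact s hsI).2 x hx.1 y₀ hy₀s hxN.symm
        · intro s hs s' hs' heq
          have heq' : s ∩ X = s' ∩ X := heq
          simp only [Finset.mem_coe, Finset.mem_filter] at hs hs'
          calc s = (s ∩ X) ∪ (s ∩ Y) := (hsplit s).symm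
            _ = (s' ∩ X) ∪ (s' ∩ Y) := by rw [heq', hs.2, hs'.2]
            _ = s' := hsplit s'
      calc (F.filter (fun s => s ∩ Y = B)).card
          ≤ ((X \ G.neighborFinset y₀).powersetCard j).card := hstep
        _ = (X \ G.neighborFinset y₀).card.choose j := by rw [Finset.card_powersetCard]
        _ ≤ (a - δ).choose j := by
            apply Nat.choose_le_choose
            rw [Finset.card_sdiff_of_subset (hNY y₀ hy₀Y)]
            exact Nat.sub_le_sub_left (hdeg y₀) a
    calc ∑ B ∈ Y.powersetCard (t-j), (F.filter (fun s => s ∩ Y = B)).card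
        ≤ (Y.powersetCard (t-j)).card • ((a - δ).choose j) :=
          Finset.sum_le_card_nsmul _ _ _ hfiber
      _ = b.choose (t-j) * ((a - δ).choose j) := by
          rw [Finset.card_powersetCard, smul_eq_mul]
      _ = (a - δ).choose j * b.choose (t - j) := mul_comm _ _
  -- the degree-weighted bound for M 1
  have hM1sum : M 1 ≤ ∑ x ∈ X, ((Y \ G.neighborFinset x).card).choose (t-1) := by
    simp only [hM]
    set F := I.filter (fun s => (s ∩ X).card = 1) with hF
    have hfib : F.card = ∑ A ∈ X.powersetCard 1, (F.filter (fun s => s ∩ X = A)).card := by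
      apply Finset.card_eq_sum_card_fiberwise
      intro s hs
      rw [Finset.mem_coe, hF, Finset.mem_filter] at hs
      rw [Finset.mem_coe, Finset.mem_powersetCard]
      exact ⟨Finset.inter_subset_right, hs.2⟩
    rw [hfib, Finset.powersetCard_one, Finset.sum_map]
    apply Finset.sum_le_sum
    intro x hx
    have hstep : (F.filter (fun s => s ∩ X = {x})).card
        ≤ ((Y \ G.neighborFinset x).powersetCard (t-1)).card := by
      apply Finset.card_le_card_of_injOn (fun s => s ∩ Y)
      · intro s hs
        rw [Finset.mem_coe, Finset.mem_filter, hF, Finset.mem_filter] at hs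
        obtain ⟨⟨hsI, hs1⟩, hsA⟩ := hs
        rw [Finset.mem_coe, Finset.mem_powersetCard]
        constructor
        · intro y hy
          rw [Finset.mem_inter] at hy
          rw [Finset.mem_sdiff]
          refine ⟨hy.2, ?_⟩
          intro hyN
          rw [SimpleGraph.mem_neighborFinset] at hyN
          have hxs : x ∈ s := by
            have : x ∈ s ∩ X := by rw [hsA]; exact Finset.mem_singleton_self x
            exact (Finset.mem_inter.mp this).1
          exact (hIfact s hsI).2 x hxs y hy.1 hyN
        · have h1 := hcards s
          have h2 := (hIfact s hsI).1
          beta_reduce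
          omega
      · intro s hs s' hs' heq
        have heq' : s ∩ Y = s' ∩ Y := heq
        simp only [Finset.mem_coe, Finset.mem_filter] at hs hs'
        calc s = (s ∩ X) ∪ (s ∩ Y) := (hsplit s).symm
          _ = (s' ∩ X) ∪ (s' ∩ Y) := by rw [heq', hs.2, hs'.2]
          _ = s' := hsplit s'
    calc (F.filter (fun s => s ∩ X = {x})).card
        ≤ ((Y \ G.neighborFinset x).powersetCard (t-1)).card := hstep
      _ = ((Y \ G.neighborFinset x).card).choose (t-1) := by rw [Finset.card_powersetCard]
  -- double counting of edges
  have hedge : δ * b ≤ ∑ x ∈ X, (G.neighborFinset x).card := by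
    have h1 : ∀ x ∈ X, (G.neighborFinset x).card = (Y.filter (fun y => G.Adj x y)).card := by
      intro x hx
      congr 1
      ext y
      rw [SimpleGraph.mem_neighborFinset, Finset.mem_filter]
      refine ⟨fun h => ⟨hNX x hx ?_, h⟩, fun h => h.2⟩
      rw [SimpleGraph.mem_neighborFinset]
      exact h
    rw [Finset.sum_congr rfl h1]
    have swap : ∑ x ∈ X, (Y.filter (fun y => G.Adj x y)).card
        = ∑ y ∈ Y, (X.filter (fun x => G.Adj x y)).card := by
      simp only [Finset.card_filter]
      rw [Finset.sum_comm]
    rw [swap]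
    have h2 : ∀ y ∈ Y, δ ≤ (X.filter (fun x => G.Adj x y)).card := by
      intro y hy
      have hsub : G.neighborFinset y ⊆ X.filter (fun x => G.Adj x y) := by
        intro x hx
        have hx2 := hx
        rw [SimpleGraph.mem_neighborFinset] at hx2
        exact Finset.mem_filter.mpr ⟨hNY y hy hx, hx2.symm⟩
      exact le_trans (hdeg y) (Finset.card_le_card hsub)
    calc δ * b = ∑ _y ∈ Y, δ := by rw [Finset.sum_const, smul_eq_mul, mul_comm]
      _ ≤ ∑ y ∈ Y, (X.filter (fun x => G.Adj x y)).card := Finset.sum_le_sum h2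
  have hsum_compl : ∑ x ∈ X, (Y \ G.neighborFinset x).card ≤ (a - δ) * b := by
    have hS12 : (∑ x ∈ X, (Y \ G.neighborFinset x).card) + (∑ x ∈ X, (G.neighborFinset x).card)
        = a * b := by
      rw [← Finset.sum_add_distrib]
      have heach : ∀ x ∈ X, (Y \ G.neighborFinset x).card + (G.neighborFinset x).card = b :=
        fun x hx => Finset.card_sdiff_add_card_eq_card (hNX x hx)
      rw [Finset.sum_congr rfl heach, Finset.sum_const, smul_eq_mul]
    have hsplitab : a * b = (a - δ) * b + δ * b := by
      rw [← Nat.add_mul, Nat.sub_add_cancel hδa]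
    apply Nat.le_of_add_le_add_right
    show (∑ x ∈ X, (Y \ G.neighborFinset x).card) + δ * b ≤ (a - δ) * b + δ * b
    calc (∑ x ∈ X, (Y \ G.neighborFinset x).card) + δ * b
        ≤ (∑ x ∈ X, (Y \ G.neighborFinset x).card) + (∑ x ∈ X, (G.neighborFinset x).card) :=
          Nat.add_le_add_left hedge _
      _ = a * b := hS12
      _ = (a - δ) * b + δ * b := hsplitab
  have hM1 : (b - δ) * M 1 ≤ b * (a - δ) * ((b - δ).choose (t-1)) := by
    calc (b - δ) * M 1
        ≤ (b - δ) * ∑ x ∈ X, ((Y \ G.neighborFinset x).card).choose (t-1) :=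
          Nat.mul_le_mul_left _ hM1sum
      _ = ∑ x ∈ X, (b - δ) * ((Y \ G.neighborFinset x).card).choose (t-1) := Finset.mul_sum _ _ _
      _ ≤ ∑ x ∈ X, (Y \ G.neighborFinset x).card * ((b - δ).choose (t-1)) := by
          apply Finset.sum_le_sum
          intro x hx
          have hle : (Y \ G.neighborFinset x).card ≤ b - δ := by
            rw [Finset.card_sdiff_of_subset (hNX x hx)]
            exact Nat.sub_le_sub_left (hdeg x) b
          have := chord ((Y \ G.neighborFinset x).card) (b - δ) (t-2) hle
          rwa [show (t-2)+1 = t-1 by omega] at this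
      _ = (∑ x ∈ X, (Y \ G.neighborFinset x).card) * ((b - δ).choose (t-1)) := by
          rw [Finset.sum_mul]
      _ ≤ ((a - δ) * b) * ((b - δ).choose (t-1)) :=
          Nat.mul_le_mul_right _ hsum_compl
      _ = b * (a - δ) * ((b - δ).choose (t-1)) := by ring
  -- assemble
  rw [hcard, hdecomp, sum_split3 t ht M]
  by_cases hbd : b = δ
  · -- complete bipartite-forced case
    have haδ : a = δ := le_antisymm (hbd ▸ hab) hδa
    have hmid0 : ∀ j ∈ Ico 1 t, M j = 0 := by
      intro j hj
      rw [Finset.mem_Ico] at hj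
      simp only [hM]
      rw [Finset.card_eq_zero]
      apply Finset.eq_empty_of_forall_notMem
      intro s hs
      rw [Finset.mem_filter] at hs
      obtain ⟨hsI, hsj⟩ := hs
      obtain ⟨hst, hind⟩ := hIfact s hsI
      have hxne : (s ∩ X).Nonempty := by rw [← Finset.card_pos]; omega
      obtain ⟨x, hxmem⟩ := hxne
      rw [Finset.mem_inter] at hxmem
      have hyne : (s ∩ Y).Nonempty := by
        rw [← Finset.card_pos]
        have := hcards s
        omega
      obtain ⟨y, hymem⟩ := hyne
      rw [Finset.mem_inter] at hymem
      have hNxY : G.neighborFinset x = Y :=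
        Finset.eq_of_subset_of_card_le (hNX x hxmem.2) (by rw [← hb, hbd]; exact hdeg x)
      have hadj : G.Adj x y := by
        have : y ∈ G.neighborFinset x := by rw [hNxY]; exact hymem.2
        rwa [SimpleGraph.mem_neighborFinset] at this
      exact hind x hxmem.1 y hymem.1 hadj
    have hz1 : M 1 = 0 := hmid0 1 (Finset.mem_Ico.mpr ⟨le_refl 1, by omega⟩)
    have hz2 : ∑ j ∈ Ico 2 t, M j = 0 := by
      apply Finset.sum_eq_zero
      intro j hj
      rw [Finset.mem_Ico] at hj
      exact hmid0 j (Finset.mem_Ico.mpr ⟨by omega, hj.2⟩)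
    rw [hz1, hz2]
    have hrw : a + b - δ = δ := by omega
    rw [hrw]
    have h0 : M 0 ≤ δ.choose t := by rw [← hbd]; exact hM0
    have hT : M t ≤ δ.choose t := by rw [← haδ]; exact hMt
    omega
  · have hbdlt : δ < b := lt_of_le_of_ne hδb (fun h => hbd h.symm)
    apply Nat.le_of_mul_le_mul_left _ (show 0 < b - δ by omega)
    have hma := main_arith δ (a-δ) (b-a) t hδ ht
    rw [show δ + (a-δ) + (a-δ) + (b-a) = a + b - δ by omega] at hma
    rw [show δ + (a-δ) + (b-a) = b by omega] at hma
    rw [show δ + (a-δ) = a by omega] at hma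
    rw [show (a-δ) + (b-a) = b - δ by omega] at hma
    calc (b - δ) * (M 0 + M 1 + (∑ j ∈ Ico 2 t, M j) + M t)
        = (b - δ) * M 1 + (b - δ) * (M 0 + (∑ j ∈ Ico 2 t, M j) + M t) := by ring
      _ ≤ b * (a - δ) * ((b - δ).choose (t-1))
          + (b - δ) * ((∑ j ∈ Ico 2 t, (a - δ).choose j * b.choose (t-j))
              + a.choose t + b.choose t) := by
          apply Nat.add_le_add hM1
          apply Nat.mul_le_mul_left
          have hsumb : ∑ j ∈ Ico 2 t, M j ≤ ∑ j ∈ Ico 2 t, (a - δ).choose j * b.choose (t-j) := by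
            apply Finset.sum_le_sum
            intro j hj
            rw [Finset.mem_Ico] at hj
            exact hMmid j (Finset.mem_Ico.mpr ⟨by omega, hj.2⟩)
          calc M 0 + (∑ j ∈ Ico 2 t, M j) + M t
              ≤ b.choose t + (∑ j ∈ Ico 2 t, (a - δ).choose j * b.choose (t-j)) + a.choose t :=
                Nat.add_le_add (Nat.add_le_add hM0 hsumb) hMt
            _ = (∑ j ∈ Ico 2 t, (a - δ).choose j * b.choose (t-j)) + a.choose t + b.choose t := by
                ring
      _ ≤ (b - δ) * ((a + b - δ).choose t + δ.choose t) := hma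


theorem count_le_final {V : Type*} [Fintype V] [DecidableEq V] (G : SimpleGraph V)
    [DecidableRel G.Adj] (δ t : ℕ) (hδ : 1 ≤ δ) (ht : 3 ≤ t)
    (X Y : Finset V) (hdisj : Disjoint X Y) (hunion : X ∪ Y = Finset.univ)
    (hX : ∀ x ∈ X, ∀ x' ∈ X, ¬ G.Adj x x')
    (hY : ∀ y ∈ Y, ∀ y' ∈ Y, ¬ G.Adj y y')
    (hdeg : ∀ v : V, δ ≤ (G.neighborFinset v).card) :
    indepT G t ≤ (X.card + Y.card - δ).choose t + δ.choose t := by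
  rcases le_total X.card Y.card with h | h
  · exact count_le G δ t hδ ht X Y hdisj hunion hX hY hdeg h
  · have := count_le G δ t hδ ht Y X hdisj.symm (by rwa [Finset.union_comm]) hY hX hdeg h
    rwa [Nat.add_comm Y.card X.card] at this

end counting

/-- Alexander–Cutler–Mink: for `δ ≥ 1`, `n ≥ 2δ`, `t ≥ 3`, every `n`-vertex bipartite graph
with minimum degree at least `δ` has at most `C(n-δ,t) + C(δ,t) = i_t(K_{δ,n-δ})`
independent sets of size `t`. -/
theorem stmt_2 {V : Type*} [Fintype V] (G : SimpleGraph V) (δ n t : ℕ)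
    (hδ : 1 ≤ δ) (hn : Fintype.card V = n) (hn2 : 2 * δ ≤ n) (ht : 3 ≤ t)
    (hbip : G.Colorable 2) (hmin : ∀ v, δ ≤ gdeg G v) :
    indepT G t ≤ (n - δ).choose t + δ.choose t := by
  classical
  obtain ⟨C⟩ := hbip
  set X := Finset.univ.filter (fun v => C v = 0) with hXdef
  set Y := Finset.univ.filter (fun v => ¬ C v = 0) with hYdef
  have hdisj : Disjoint X Y := Finset.disjoint_filter_filter_not _ _ _
  have hunion : X ∪ Y = Finset.univ := Finset.filter_union_filter_not_eq _ _
  have fin2 : ∀ i : Fin 2, i ≠ 0 → i = 1 := by decide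
  have hX : ∀ x ∈ X, ∀ x' ∈ X, ¬ G.Adj x x' := by
    intro x hx x' hx' hadj
    rw [hXdef, Finset.mem_filter] at hx hx'
    exact C.valid hadj (by rw [hx.2, hx'.2])
  have hY : ∀ y ∈ Y, ∀ y' ∈ Y, ¬ G.Adj y y' := by
    intro y hy y' hy' hadj
    rw [hYdef, Finset.mem_filter] at hy hy'
    exact C.valid hadj (by rw [fin2 _ hy.2, fin2 _ hy'.2])
  have hdeg : ∀ v : V, δ ≤ (G.neighborFinset v).card := by
    intro v
    have h1 := hmin v
    rw [gdeg, Set.ncard_eq_toFinset_card'] at h1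
    rwa [SimpleGraph.neighborFinset_def]
  have hcardn : X.card + Y.card = n := by
    rw [hXdef, hYdef, Finset.card_filter_add_card_filter_not, Finset.card_univ, hn]
  have := count_le_final G δ t hδ ht X Y hdisj hunion hX hY hdeg
  rwa [hcardn] at this
end

section
/- Let n ≥ 6 and let G be a graph on n vertices with minimum degree at least 3. Then i_3(G) = C(n-3, 3) + 1 if and only if G is isomorphic to K_{3,n-3}. -/
open SimpleGraph

set_option linter.unusedSectionVars false
set_option linter.unusedVariables false
set_option maxHeartbeats 2000000
open SimpleGraph Finset

namespace Aux

lemma choose2 : ∀ m : ℕ, 2 * m.choose 2 = m * (m - 1)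
  | 0 => rfl
  | (m+1) => by
    rw [Nat.choose_succ_succ' m 1, Nat.mul_add, choose2 m, Nat.choose_one_right]
    cases m with
    | zero => rfl
    | succ k =>
      simp only [Nat.add_sub_cancel]
      ring

lemma prod_lb (k d e : ℕ) (hd : k ≤ d) (he : k ≤ e) : k * (d + e - k) ≤ d * e := by
  obtain ⟨a, rfl⟩ := Nat.exists_eq_add_of_le hd
  obtain ⟨b, rfl⟩ := Nat.exists_eq_add_of_le he
  have h1 : k + a + (k + b) - k = k + (a + b) := by omega
  rw [h1]
  nlinarith [Nat.zero_le (a * b)]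

lemma chooseid {n : ℕ} (h : 1 ≤ n) :
    n.choose 3 = (n - 1).choose 2 + (n - 1).choose 3 := by
  obtain ⟨m, rfl⟩ : ∃ m, n = m + 1 := ⟨n - 1, by omega⟩
  simp only [Nat.add_sub_cancel]
  exact Nat.choose_succ_succ' m 2

variable {V : Type*} [Fintype V] [DecidableEq V] (G : SimpleGraph V) [DecidableRel G.Adj]

def nI (s : Finset V) : Prop := ∀ u ∈ s, ∀ v ∈ s, ¬ G.Adj u v

instance : DecidablePred (nI G) := fun _ => by unfold nI; infer_instance

def I3 (A : Finset V) : Finset (Finset V) := (A.powersetCard 3).filter (nI G)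
def B3 (A : Finset V) : Finset (Finset V) := (A.powersetCard 3).filter (fun s => ¬ nI G s)
def I2 (A : Finset V) : Finset (Finset V) := (A.powersetCard 2).filter (nI G)
def dg (A : Finset V) (v : V) : ℕ := (A.filter (G.Adj v)).card
def M (A : Finset V) (h : V) : Finset V := (A.erase h).filter (fun w => ¬ G.Adj h w)

lemma nI_mono {s t : Finset V} (h : nI G s) (hts : t ⊆ s) : nI G t :=
  fun u hu v hv => h u (hts hu) v (hts hv)

lemma I3_add_B3 (A : Finset V) : (I3 G A).card + (B3 G A).card = A.card.choose 3 := by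
  rw [I3, B3, Finset.card_filter_add_card_filter_not, Finset.card_powersetCard]

lemma I3_le (A : Finset V) : (I3 G A).card ≤ A.card.choose 3 := by
  rw [← Finset.card_powersetCard 3 A]
  exact Finset.card_le_card (Finset.filter_subset _ _)

lemma I2_le (A : Finset V) : (I2 G A).card ≤ A.card.choose 2 := by
  rw [← Finset.card_powersetCard 2 A]
  exact Finset.card_le_card (Finset.filter_subset _ _)

lemma dg_le {A : Finset V} {v : V} (hv : v ∈ A) : dg G A v ≤ A.card - 1 := by
  have h : A.filter (G.Adj v) ⊆ A.erase v := by
    intro u hu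
    simp only [Finset.mem_filter] at hu
    exact Finset.mem_erase.2 ⟨hu.2.ne', hu.1⟩
  calc dg G A v ≤ (A.erase v).card := Finset.card_le_card h
    _ = A.card - 1 := Finset.card_erase_of_mem hv

lemma dg_erase (A : Finset V) (h v : V) : dg G A v - 1 ≤ dg G (A.erase h) v := by
  have hsub : (A.filter (G.Adj v)).erase h ⊆ (A.erase h).filter (G.Adj v) := by
    intro u hu
    simp only [Finset.mem_erase, Finset.mem_filter] at *
    tauto
  have h2 := Finset.card_le_card hsub
  have h3 := Finset.pred_card_le_card_erase (s := A.filter (G.Adj v)) (a := h)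
  unfold dg
  omega

lemma filter_adj_erase (A : Finset V) (v : V) :
    (A.erase v).filter (G.Adj v) = A.filter (G.Adj v) := by
  ext u
  simp only [Finset.mem_filter, Finset.mem_erase]
  exact ⟨fun h => ⟨h.1.2, h.2⟩, fun h => ⟨⟨h.2.ne', h.1⟩, h.2⟩⟩

lemma card_M {A : Finset V} {h : V} (hh : h ∈ A) :
    (M G A h).card = A.card - 1 - dg G A h := by
  have h1 : ((A.erase h).filter (G.Adj h)).card + ((A.erase h).filter (fun w => ¬ G.Adj h w)).card
      = (A.erase h).card := Finset.card_filter_add_card_filter_not _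
  rw [filter_adj_erase (G := G) A h] at h1
  have h2 : (A.erase h).card = A.card - 1 := Finset.card_erase_of_mem hh
  rw [M]; unfold dg; omega

lemma mem_M {A : Finset V} {h w : V} :
    w ∈ M G A h ↔ w ∈ A ∧ w ≠ h ∧ ¬ G.Adj h w := by
  simp only [M, Finset.mem_filter, Finset.mem_erase]
  tauto
lemma del {A : Finset V} {h : V} (hh : h ∈ A) :
    (I3 G A).card = (I3 G (A.erase h)).card + (I2 G (M G A h)).card := by
  have hsplit : ((I3 G A).filter (fun s => h ∉ s)).card + ((I3 G A).filter (fun s => ¬ h ∉ s)).card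
      = (I3 G A).card := Finset.card_filter_add_card_filter_not _
  have e1 : (I3 G A).filter (fun s => h ∉ s) = I3 G (A.erase h) := by
    ext s
    simp only [I3, Finset.mem_filter, Finset.mem_powersetCard, Finset.subset_erase]
    tauto
  have e2 : ((I3 G A).filter (fun s => ¬ h ∉ s)).card = (I2 G (M G A h)).card := by
    apply Finset.card_bij (fun s _ => s.erase h)
    · intro s hs
      simp only [I3, Finset.mem_filter, Finset.mem_powersetCard, not_not] at hs
      obtain ⟨⟨⟨hsub, hc⟩, hind⟩, hmem⟩ := hs
      simp only [I2, Finset.mem_filter, Finset.mem_powersetCard]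
      refine ⟨⟨?_, ?_⟩, nI_mono G hind (Finset.erase_subset _ _)⟩
      · intro u hu
        simp only [Finset.mem_erase] at hu
        simp only [M, Finset.mem_filter, Finset.mem_erase]
        exact ⟨⟨hu.1, hsub hu.2⟩, hind h hmem u hu.2⟩
      · rw [Finset.card_erase_of_mem hmem, hc]
    · intro s hs t ht hst
      simp only [Finset.mem_filter, not_not] at hs ht
      rw [← Finset.insert_erase hs.2, ← Finset.insert_erase ht.2, hst]
    · intro e he
      simp only [I2, Finset.mem_filter, Finset.mem_powersetCard] at he
      obtain ⟨⟨hsub, hc⟩, hind⟩ := he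
      have hhe : h ∉ e := fun hmem => by
        have := hsub hmem
        simp only [M, Finset.mem_filter, Finset.mem_erase] at this
        exact this.1.1 rfl
      refine ⟨insert h e, ?_, by rw [Finset.erase_insert hhe]⟩
      simp only [I3, Finset.mem_filter, Finset.mem_powersetCard, not_not]
      have hMe : ∀ w ∈ e, w ∈ A ∧ ¬ G.Adj h w := by
        intro w hw
        have := hsub hw
        simp only [M, Finset.mem_filter, Finset.mem_erase] at this
        exact ⟨this.1.2, this.2⟩
      refine ⟨⟨⟨?_, ?_⟩, ?_⟩, Finset.mem_insert_self _ _⟩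
      · intro u hu
        rcases Finset.mem_insert.1 hu with rfl | hu
        · exact hh
        · exact (hMe u hu).1
      · rw [Finset.card_insert_of_notMem hhe, hc]
      · intro u hu v hv
        rcases Finset.mem_insert.1 hu with h1 | hu' <;> rcases Finset.mem_insert.1 hv with h2 | hv'
        · subst h1; subst h2; exact G.irrefl
        · subst h1; exact (hMe v hv').2
        · subst h2; exact fun a => (hMe u hu').2 a.symm
        · exact hind u hu' v hv'
  rw [e1] at hsplit
  omega

lemma key (A : Finset V) :
    ∑ v ∈ A, dg G A v * (A.card - 1 - dg G A v) ≤ 2 * (B3 G A).card := by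
  classical
  set D : Finset ((_ : V) × V × V) :=
    A.sigma (fun v => (A.filter (G.Adj v)) ×ˢ (M G A v)) with hD
  have hmem : ∀ t : (_ : V) × V × V, t ∈ D ↔
      t.1 ∈ A ∧ (t.2.1 ∈ A ∧ G.Adj t.1 t.2.1) ∧ (t.2.2 ∈ A ∧ t.2.2 ≠ t.1 ∧ ¬ G.Adj t.1 t.2.2) := by
    intro t
    simp only [hD, Finset.mem_sigma, Finset.mem_product, Finset.mem_filter, M,
      Finset.mem_erase]
    tauto
  have hcard : D.card = ∑ v ∈ A, dg G A v * (A.card - 1 - dg G A v) := by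
    rw [hD, Finset.card_sigma]
    apply Finset.sum_congr rfl
    intro v hv
    rw [Finset.card_product, card_M G hv]
    rfl
  set F : ((_ : V) × V × V) → Finset V := fun t => {t.1, t.2.1, t.2.2} with hF
  have hmaps : ∀ t ∈ D, F t ∈ B3 G A := by
    intro t ht
    rw [hmem] at ht
    obtain ⟨h1, ⟨h2, hadj⟩, h3, hne, hnadj⟩ := ht
    have d12 : t.1 ≠ t.2.1 := hadj.ne
    have d13 : t.1 ≠ t.2.2 := hne.symm
    have d23 : t.2.1 ≠ t.2.2 := fun e => hnadj (e ▸ hadj)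
    simp only [B3, Finset.mem_filter, Finset.mem_powersetCard]
    refine ⟨⟨?_, ?_⟩, ?_⟩
    · intro x hx
      simp only [hF, Finset.mem_insert, Finset.mem_singleton] at hx
      rcases hx with rfl | rfl | rfl <;> assumption
    · rw [hF]
      rw [Finset.card_insert_of_notMem (by simp [d12, d13]),
        Finset.card_insert_of_notMem (by simp [d23]), Finset.card_singleton]
    · intro hind
      exact hind t.1 (by simp [hF]) t.2.1 (by simp [hF]) hadj
  have hfib : ∀ s ∈ B3 G A, (D.filter (fun t => F t = s)).card ≤ 2 := by
    intro s hs
    have hs3 : s.card = 3 := by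
      simp only [B3, Finset.mem_filter, Finset.mem_powersetCard] at hs
      exact hs.1.2
    set Fs := D.filter (fun t => F t = s) with hFs
    have hmemFs : ∀ t : (_ : V) × V × V, t ∈ Fs →
        (G.Adj t.1 t.2.1 ∧ ¬ G.Adj t.1 t.2.2 ∧ t.2.2 ≠ t.1) ∧ ({t.1, t.2.1, t.2.2} : Finset V) = s := by
      intro t ht
      rw [hFs, Finset.mem_filter, hmem] at ht
      exact ⟨⟨ht.1.2.1.2, ht.1.2.2.2.2, ht.1.2.2.2.1⟩, ht.2⟩
    -- injectivity of first projection on Fs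
    have hinj : ∀ t ∈ Fs, ∀ t' ∈ Fs, t.1 = t'.1 → t = t' := by
      intro t ht t' ht' h1
      obtain ⟨⟨ha, hna, hne⟩, hset⟩ := hmemFs t ht
      obtain ⟨⟨ha', hna', hne'⟩, hset'⟩ := hmemFs t' ht'
      rw [← h1] at ha' hna' hne' hset'
      rw [← hset] at hset'
      have hu : t'.2.1 = t.2.1 := by
        have hm : t'.2.1 ∈ ({t.1, t.2.1, t.2.2} : Finset V) := by
          rw [← hset']; simp
        simp only [Finset.mem_insert, Finset.mem_singleton] at hm
        rcases hm with h | h | h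
        · exact absurd (h ▸ ha') (G.irrefl)
        · exact h
        · exact absurd (h ▸ ha') hna
      have hw : t'.2.2 = t.2.2 := by
        have hm : t'.2.2 ∈ ({t.1, t.2.1, t.2.2} : Finset V) := by
          rw [← hset']; simp
        simp only [Finset.mem_insert, Finset.mem_singleton] at hm
        rcases hm with h | h | h
        · exact absurd h hne'
        · exact absurd (h ▸ ha) (fun a => hna' (by rwa [h]))
        · exact h
      exact Sigma.ext h1 (heq_of_eq (Prod.ext_iff.2 ⟨hu.symm, hw.symm⟩))
    by_contra hgt
    push_neg at hgt
    have h3le : 3 ≤ Fs.card := hgt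
    have himg : Fs.image (fun t => t.1) = s := by
      apply Finset.eq_of_subset_of_card_le
      · intro x hx
        obtain ⟨t, ht, rfl⟩ := Finset.mem_image.1 hx
        obtain ⟨_, hset⟩ := hmemFs t ht
        rw [← hset]; simp
      · rw [Finset.card_image_of_injOn (fun t ht t' ht' => hinj t ht t' ht')]
        omega
    obtain ⟨t₀, ht₀⟩ := Finset.card_pos.1 (by omega : 0 < Fs.card)
    obtain ⟨⟨ha0, hna0, hne0⟩, hset0⟩ := hmemFs t₀ ht₀
    have hu₀s : t₀.2.1 ∈ s := by rw [← hset0]; simp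
    obtain ⟨t₁, ht₁, ht₁1⟩ := Finset.mem_image.1 (himg ▸ hu₀s)
    obtain ⟨⟨ha1, hna1, hne1⟩, hset1⟩ := hmemFs t₁ ht₁
    rw [ht₁1] at ha1 hna1 hne1 hset1
    have hw₀s : t₀.2.2 ∈ s := by rw [← hset0]; simp
    obtain ⟨t₂, ht₂, ht₂1⟩ := Finset.mem_image.1 (himg ▸ hw₀s)
    obtain ⟨⟨ha2, hna2, hne2⟩, hset2⟩ := hmemFs t₂ ht₂
    rw [ht₂1] at ha2 hna2 hne2 hset2
    -- step 1 : derive ¬ G.Adj t₀.2.1 t₀.2.2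
    have hR : ¬ G.Adj t₀.2.1 t₀.2.2 := by
      have hu1m : t₁.2.1 ∈ ({t₀.1, t₀.2.1, t₀.2.2} : Finset V) := by
        rw [hset0, ← hset1]; simp
      simp only [Finset.mem_insert, Finset.mem_singleton] at hu1m
      rcases hu1m with h | h | h
      · -- t₁.2.1 = t₀.1 : then w₁ must be t₀.2.2 giving conclusion
        have hw1m : t₁.2.2 ∈ ({t₀.1, t₀.2.1, t₀.2.2} : Finset V) := by
          rw [hset0, ← hset1]; simp
        simp only [Finset.mem_insert, Finset.mem_singleton] at hw1m
        rcases hw1m with h2 | h2 | h2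
        · exact absurd (h ▸ ha1) (h2 ▸ hna1)
        · exact absurd h2 hne1
        · exact h2 ▸ hna1
      · exact absurd (h ▸ ha1) (G.irrefl)
      · -- t₁.2.1 = t₀.2.2 : then w₁ = t₀.1 and contradiction with ha0
        have hw1m : t₁.2.2 ∈ ({t₀.1, t₀.2.1, t₀.2.2} : Finset V) := by
          rw [hset0, ← hset1]; simp
        simp only [Finset.mem_insert, Finset.mem_singleton] at hw1m
        rcases hw1m with h2 | h2 | h2
        · exact absurd ha0.symm (h2 ▸ hna1)
        · exact absurd h2 hne1
        · exact absurd (h ▸ ha1) (h2 ▸ hna1)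
    -- step 2 : contradiction via t₂
    have hu2m : t₂.2.1 ∈ ({t₀.1, t₀.2.1, t₀.2.2} : Finset V) := by
      rw [hset0, ← hset2]; simp
    simp only [Finset.mem_insert, Finset.mem_singleton] at hu2m
    rcases hu2m with h | h | h
    · exact hna0 (h ▸ ha2).symm
    · exact hR (h ▸ ha2).symm
    · exact G.irrefl (h ▸ ha2)
  calc ∑ v ∈ A, dg G A v * (A.card - 1 - dg G A v) = D.card := hcard.symm
    _ = ∑ s ∈ B3 G A, (D.filter (fun t => F t = s)).card :=
        Finset.card_eq_sum_card_fiberwise hmaps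
    _ ≤ ∑ _s ∈ B3 G A, 2 := Finset.sum_le_sum hfib
    _ = 2 * (B3 G A).card := by rw [Finset.sum_const, smul_eq_mul, mul_comm]

lemma three_subset_ind {B : Finset V}
    (hfull : I3 G B = B.powersetCard 3) (h3 : 3 ≤ B.card) :
    ∀ u ∈ B, ∀ v ∈ B, ¬ G.Adj u v := by
  intro u hu v hv hadj
  have huv : u ≠ v := hadj.ne
  have hsub : ({u, v} : Finset V) ⊆ B := by
    intro x hx
    rcases Finset.mem_insert.1 hx with rfl | hx
    · exact hu
    · exact (Finset.mem_singleton.1 hx) ▸ hv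
  have hlt : ({u, v} : Finset V).card < B.card := by
    rw [Finset.card_pair huv]; omega
  have hss : ({u, v} : Finset V) ⊂ B :=
    Finset.ssubset_iff_subset_ne.2 ⟨hsub, fun e => by rw [e] at hlt; omega⟩
  obtain ⟨t, htB, htuv⟩ := Finset.exists_of_ssubset hss
  have htu : t ≠ u := fun e => htuv (by simp [e])
  have htv : t ≠ v := fun e => htuv (by simp [e])
  have hmem : insert t {u, v} ∈ B.powersetCard 3 := by
    rw [Finset.mem_powersetCard]
    constructor
    · intro x hx
      rcases Finset.mem_insert.1 hx with rfl | hx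
      · exact htB
      · exact hsub hx
    · rw [Finset.card_insert_of_notMem htuv, Finset.card_pair huv]
  have hmem2 : insert t {u, v} ∈ I3 G B := by rw [hfull]; exact hmem
  have hind : nI G (insert t {u, v}) := by
    rw [I3, Finset.mem_filter] at hmem2; exact hmem2.2
  exact hind u (by simp) v (by simp) hadj

lemma E1 (A : Finset V) (h4 : 4 ≤ A.card) (hd : ∀ v ∈ A, 1 ≤ dg G A v) :
    (I3 G A).card ≤ (A.card - 1).choose 3 ∧
    ((I3 G A).card = (A.card - 1).choose 3 →
      ∃ a ∈ A, (∀ v ∈ A, v ≠ a → G.Adj a v) ∧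
        (∀ u ∈ A, ∀ v ∈ A, G.Adj u v → u = a ∨ v = a)) := by
  by_cases hh : ∃ h ∈ A, dg G A h = A.card - 1
  · obtain ⟨h, hhA, hdh⟩ := hh
    have hcM : (M G A h).card = 0 := by
      have := card_M G hhA; omega
    have hMempty : M G A h = ∅ := Finset.card_eq_zero.1 hcM
    have hdel := del G hhA
    have hI2 : (I2 G (M G A h)).card = 0 := by
      have := I2_le G (M G A h); rw [hcM] at this; simpa using this
    have hA' : (A.erase h).card = A.card - 1 := Finset.card_erase_of_mem hhA
    have hle : (I3 G (A.erase h)).card ≤ (A.card - 1).choose 3 := by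
      have := I3_le G (A.erase h); rwa [hA'] at this
    refine ⟨by omega, fun heq => ?_⟩
    have hfull : I3 G (A.erase h) = (A.erase h).powersetCard 3 := by
      apply Finset.eq_of_subset_of_card_le
      · rw [I3]; exact Finset.filter_subset _ _
      · rw [Finset.card_powersetCard, hA']
        omega
    have hind := three_subset_ind G hfull (by omega)
    refine ⟨h, hhA, fun v hv hvh => ?_, fun u hu v hv hadj => ?_⟩
    · by_contra hnadj
      have : v ∈ M G A h := by
        simp only [M, Finset.mem_filter, Finset.mem_erase]
        exact ⟨⟨hvh, hv⟩, hnadj⟩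
      rw [hMempty] at this
      exact absurd this (Finset.notMem_empty v)
    · by_contra hne
      push_neg at hne
      exact hind u (Finset.mem_erase.2 ⟨hne.1, hu⟩) v (Finset.mem_erase.2 ⟨hne.2, hv⟩) hadj
  · push_neg at hh
    have hstrict : (I3 G A).card < (A.card - 1).choose 3 := by
      have hdle : ∀ v ∈ A, dg G A v ≤ A.card - 2 := by
        intro v hv
        have h1 := dg_le G hv
        have h2 := hh v hv
        omega
      have hterm : ∀ v ∈ A, A.card - 2 ≤ dg G A v * (A.card - 1 - dg G A v) := by
        intro v hv
        have h1 := hd v hv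
        have h2 := hdle v hv
        have h3 := prod_lb 1 (dg G A v) (A.card - 1 - dg G A v) h1 (by omega)
        have h4 : dg G A v + (A.card - 1 - dg G A v) - 1 = A.card - 2 := by omega
        rw [h4, one_mul] at h3
        exact h3
      have hsum := Finset.card_nsmul_le_sum A _ _ hterm
      rw [smul_eq_mul] at hsum
      have hkey := key G A
      have hid := I3_add_B3 G A
      rw [chooseid (by omega : 1 ≤ A.card)] at hid
      have h2c := choose2 (A.card - 1)
      have e1 : A.card - 1 - 1 = A.card - 2 := by omega
      rw [e1] at h2c
      have hlt : (A.card - 1) * (A.card - 2) < A.card * (A.card - 2) :=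
        Nat.mul_lt_mul_of_lt_of_le (by omega) (le_refl _) (by omega)
      obtain ⟨p, hp⟩ : ∃ p, A.card * (A.card - 2) = p := ⟨_, rfl⟩
      obtain ⟨q, hq⟩ : ∃ q, (A.card - 1) * (A.card - 2) = q := ⟨_, rfl⟩
      rw [hp] at hsum hlt
      rw [hq] at h2c hlt
      omega
    exact ⟨le_of_lt hstrict, fun heq => absurd heq (by omega)⟩

lemma E2 (A : Finset V) (h5 : 5 ≤ A.card) (hd : ∀ v ∈ A, 2 ≤ dg G A v) :
    (I3 G A).card ≤ (A.card - 2).choose 3 ∧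
    ((I3 G A).card = (A.card - 2).choose 3 →
      ∃ a ∈ A, ∃ b ∈ A, a ≠ b ∧
        (∀ v ∈ A, v ≠ a → v ≠ b → G.Adj a v ∧ G.Adj b v) ∧
        (∀ u ∈ A, ∀ v ∈ A, G.Adj u v → u = a ∨ v = a ∨ u = b ∨ v = b)) := by
  by_cases hh : ∃ h ∈ A, A.card - 2 ≤ dg G A h
  · obtain ⟨h, hhA, hdh⟩ := hh
    have hcM : (M G A h).card ≤ 1 := by have := card_M G hhA; omega
    have hI2 : (I2 G (M G A h)).card = 0 := by
      have h1 := I2_le G (M G A h)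
      have h2 : (M G A h).card.choose 2 = 0 := Nat.choose_eq_zero_of_lt (by omega)
      omega
    have hdel := del G hhA
    have hA' : (A.erase h).card = A.card - 1 := Finset.card_erase_of_mem hhA
    have hd' : ∀ v ∈ A.erase h, 1 ≤ dg G (A.erase h) v := by
      intro v hv
      have h1 := hd v (Finset.mem_of_mem_erase hv)
      have h2 := dg_erase G A h v
      omega
    obtain ⟨hE1le, hE1eq⟩ := E1 G (A.erase h) (by omega) hd'
    rw [hA', show A.card - 1 - 1 = A.card - 2 by omega] at hE1le hE1eq
    refine ⟨by omega, fun heq => ?_⟩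
    obtain ⟨a, haA', hadom, haonly⟩ := hE1eq (by omega)
    have haA : a ∈ A := Finset.mem_of_mem_erase haA'
    have hah : a ≠ h := (Finset.mem_erase.1 haA').1
    refine ⟨a, haA, h, hhA, hah, ?_, ?_⟩
    · intro v hv hva hvh
      have hvA' : v ∈ A.erase h := Finset.mem_erase.2 ⟨hvh, hv⟩
      refine ⟨hadom v hvA' hva, ?_⟩
      by_contra hnadj
      have hsub : A.filter (G.Adj v) ⊆ {a} := by
        intro u hu
        simp only [Finset.mem_filter] at hu
        obtain ⟨huA, hadj⟩ := hu
        have huh : u ≠ h := fun e => hnadj (by rw [e] at hadj; exact hadj.symm)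
        rcases haonly v hvA' u (Finset.mem_erase.2 ⟨huh, huA⟩) hadj with h1 | h1
        · exact absurd h1 hva
        · simp [h1]
      have hdgv : dg G A v ≤ 1 := by
        unfold dg
        calc (A.filter (G.Adj v)).card ≤ ({a} : Finset V).card := Finset.card_le_card hsub
          _ = 1 := Finset.card_singleton a
      have := hd v hv
      omega
    · intro u hu v hv hadj
      by_cases huh : u = h
      · tauto
      by_cases hvh : v = h
      · tauto
      have := haonly u (Finset.mem_erase.2 ⟨huh, hu⟩) v (Finset.mem_erase.2 ⟨hvh, hv⟩) hadj
      tauto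
  · push_neg at hh
    have hstrict : (I3 G A).card < (A.card - 2).choose 3 := by
      have hterm : ∀ v ∈ A, 2 * (A.card - 3) ≤ dg G A v * (A.card - 1 - dg G A v) := by
        intro v hv
        have h1 := hd v hv
        have h2 := hh v hv
        have h2b := dg_le G hv
        have h3 := prod_lb 2 (dg G A v) (A.card - 1 - dg G A v) h1 (by omega)
        have h4 : 2 * (dg G A v + (A.card - 1 - dg G A v) - 2) = 2 * (A.card - 3) := by omega
        omega
      have hsum := Finset.card_nsmul_le_sum A _ _ hterm
      rw [smul_eq_mul] at hsum
      have hkey := key G A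
      have hid := I3_add_B3 G A
      rw [chooseid (by omega : 1 ≤ A.card)] at hid
      have hid2 : (A.card - 1).choose 3 = (A.card - 2).choose 2 + (A.card - 2).choose 3 := by
        have h0 := chooseid (n := A.card - 1) (by omega)
        rwa [show A.card - 1 - 1 = A.card - 2 by omega] at h0
      rw [hid2] at hid
      have h2c1 := choose2 (A.card - 1)
      rw [show A.card - 1 - 1 = A.card - 2 by omega] at h2c1
      have h2c2 := choose2 (A.card - 2)
      rw [show A.card - 2 - 1 = A.card - 3 by omega] at h2c2
      have hnum : (A.card - 1) * (A.card - 2) + (A.card - 2) * (A.card - 3)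
          < A.card * (2 * (A.card - 3)) := by
        obtain ⟨k, hk⟩ : ∃ k, A.card = k + 5 := ⟨A.card - 5, by omega⟩
        rw [hk, show k + 5 - 1 = k + 4 by omega, show k + 5 - 2 = k + 3 by omega,
          show k + 5 - 3 = k + 2 by omega]
        nlinarith [Nat.zero_le k]
      obtain ⟨P, hP⟩ : ∃ p, A.card * (2 * (A.card - 3)) = p := ⟨_, rfl⟩
      obtain ⟨q1, hq1⟩ : ∃ q, (A.card - 1) * (A.card - 2) = q := ⟨_, rfl⟩
      obtain ⟨q2, hq2⟩ : ∃ q, (A.card - 2) * (A.card - 3) = q := ⟨_, rfl⟩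
      rw [hP] at hsum hnum
      rw [hq1] at h2c1 hnum
      rw [hq2] at h2c2 hnum
      omega
    exact ⟨le_of_lt hstrict, fun heq => absurd heq (by omega)⟩


lemma E3 (A : Finset V) (h6 : 6 ≤ A.card) (hd : ∀ v ∈ A, 3 ≤ dg G A v) :
    (I3 G A).card ≤ (A.card - 3).choose 3 + 1 ∧
    ((I3 G A).card = (A.card - 3).choose 3 + 1 →
      ∃ a ∈ A, ∃ b ∈ A, ∃ c ∈ A, a ≠ b ∧ a ≠ c ∧ b ≠ c ∧
        (∀ u ∈ A, ∀ v ∈ A,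
          (G.Adj u v ↔ ¬(u ∈ ({a, b, c} : Finset V) ↔ v ∈ ({a, b, c} : Finset V))))) := by
  by_cases hh : ∃ h ∈ A, A.card - 3 ≤ dg G A h
  · obtain ⟨h, hhA, hdh⟩ := hh
    have hcM : (M G A h).card ≤ 2 := by have := card_M G hhA; omega
    have hI2le : (I2 G (M G A h)).card ≤ 1 := by
      have h1 := I2_le G (M G A h)
      have h2 : (M G A h).card.choose 2 ≤ 1 :=
        calc (M G A h).card.choose 2 ≤ (2 : ℕ).choose 2 := Nat.choose_le_choose 2 hcM
          _ = 1 := rfl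
      omega
    have hdel := del G hhA
    have hA' : (A.erase h).card = A.card - 1 := Finset.card_erase_of_mem hhA
    have hd' : ∀ v ∈ A.erase h, 2 ≤ dg G (A.erase h) v := by
      intro v hv
      have h1 := hd v (Finset.mem_of_mem_erase hv)
      have h2 := dg_erase G A h v
      omega
    obtain ⟨hE2le, hE2eq⟩ := E2 G (A.erase h) (by omega) hd'
    rw [hA', show A.card - 1 - 2 = A.card - 3 by omega] at hE2le hE2eq
    refine ⟨by omega, fun heq => ?_⟩
    have hI3A' : (I3 G (A.erase h)).card = (A.card - 3).choose 3 := by omega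
    have hI2eq : (I2 G (M G A h)).card = 1 := by omega
    obtain ⟨a, haA', b, hbA', hab, hdom, honly⟩ := hE2eq hI3A'
    obtain ⟨e, he⟩ := Finset.card_pos.1 (by omega : 0 < (I2 G (M G A h)).card)
    rw [I2, Finset.mem_filter, Finset.mem_powersetCard] at he
    obtain ⟨⟨heM, hec⟩, heI⟩ := he
    have hMab : ∀ w ∈ M G A h, w = a ∨ w = b := by
      intro w hw
      rw [mem_M] at hw
      obtain ⟨hwA, hwh, hwna⟩ := hw
      by_contra hcon
      push_neg at hcon
      have hsub : A.filter (G.Adj w) ⊆ {a, b} := by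
        intro u hu
        simp only [Finset.mem_filter] at hu
        obtain ⟨huA, hadj⟩ := hu
        have huh : u ≠ h := fun e0 => hwna (by rw [e0] at hadj; exact hadj.symm)
        rcases honly w (Finset.mem_erase.2 ⟨hwh, hwA⟩) u (Finset.mem_erase.2 ⟨huh, huA⟩) hadj
          with h1 | h1 | h1 | h1
        · exact absurd h1 hcon.1
        · simp [h1]
        · exact absurd h1 hcon.2
        · simp [h1]
      have hdgw : dg G A w ≤ 2 := by
        unfold dg
        calc (A.filter (G.Adj w)).card ≤ ({a, b} : Finset V).card := Finset.card_le_card hsub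
          _ ≤ 2 := Finset.card_insert_le a {b}
      have := hd w hwA
      omega
    have hMeq : M G A h = e := (Finset.eq_of_subset_of_card_le heM (by omega)).symm
    obtain ⟨x, y, hxy, hexy⟩ := Finset.card_eq_two.1 hec
    have hxM : x ∈ M G A h := heM (by rw [hexy]; simp)
    have hyM : y ∈ M G A h := heM (by rw [hexy]; simp)
    have habM : a ∈ M G A h ∧ b ∈ M G A h := by
      rcases hMab x hxM with rfl | rfl <;> rcases hMab y hyM with rfl | rfl
      · exact absurd rfl hxy
      · exact ⟨hxM, hyM⟩
      · exact ⟨hyM, hxM⟩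
      · exact absurd rfl hxy
    obtain ⟨haM, hbM⟩ := habM
    have hnab : ¬ G.Adj a b := by
      have ha' : a ∈ e := by rw [← hMeq]; exact haM
      have hb' : b ∈ e := by rw [← hMeq]; exact hbM
      exact heI a ha' b hb'
    have hnha : ¬ G.Adj h a := ((mem_M G).1 haM).2.2
    have hnhb : ¬ G.Adj h b := ((mem_M G).1 hbM).2.2
    have hadjh : ∀ v ∈ A, v ≠ h → v ≠ a → v ≠ b → G.Adj h v := by
      intro v hvA hvh hva hvb
      by_contra hc
      rcases hMab v ((mem_M G).2 ⟨hvA, hvh, hc⟩) with h1 | h1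
      · exact hva h1
      · exact hvb h1
    have haA : a ∈ A := Finset.mem_of_mem_erase haA'
    have hbA : b ∈ A := Finset.mem_of_mem_erase hbA'
    have hah : a ≠ h := (Finset.mem_erase.1 haA').1
    have hbh : b ≠ h := (Finset.mem_erase.1 hbA').1
    refine ⟨a, haA, b, hbA, h, hhA, hab, hah, hbh, ?_⟩
    intro u hu v hv
    simp only [Finset.mem_insert, Finset.mem_singleton]
    constructor
    · intro hadj
      by_cases huS : u = a ∨ u = b ∨ u = h <;> by_cases hvS : v = a ∨ v = b ∨ v = h
      · -- both in S : contradiction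
        exfalso
        rcases huS with rfl | rfl | rfl <;> rcases hvS with rfl | rfl | rfl
        · exact G.irrefl hadj
        · exact hnab hadj
        · exact hnha hadj.symm
        · exact hnab hadj.symm
        · exact G.irrefl hadj
        · exact hnhb hadj.symm
        · exact hnha hadj
        · exact hnhb hadj
        · exact G.irrefl hadj
      · exact fun hiff => hvS (hiff.1 huS)
      · exact fun hiff => huS (hiff.2 hvS)
      · -- neither : contradiction
        exfalso
        push_neg at huS hvS
        have := honly u (Finset.mem_erase.2 ⟨huS.2.2, hu⟩) v (Finset.mem_erase.2 ⟨hvS.2.2, hv⟩) hadj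
        tauto
    · intro hne
      by_cases huS : u = a ∨ u = b ∨ u = h <;> by_cases hvS : v = a ∨ v = b ∨ v = h
      · exact absurd (iff_of_true huS hvS) hne
      · -- u in S, v not
        push_neg at hvS
        obtain ⟨hva, hvb, hvh⟩ := hvS
        have hvA' : v ∈ A.erase h := Finset.mem_erase.2 ⟨hvh, hv⟩
        rcases huS with rfl | rfl | rfl
        · exact (hdom v hvA' hva hvb).1
        · exact (hdom v hvA' hva hvb).2
        · exact hadjh v hv hvh hva hvb
      · push_neg at huS
        obtain ⟨hua, hub, huh⟩ := huS
        have huA' : u ∈ A.erase h := Finset.mem_erase.2 ⟨huh, hu⟩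
        rcases hvS with rfl | rfl | rfl
        · exact (hdom u huA' hua hub).1.symm
        · exact (hdom u huA' hua hub).2.symm
        · exact (hadjh u hu huh hua hub).symm
      · exact absurd (iff_of_false huS hvS) hne
  · push_neg at hh
    obtain ⟨v₀, hv₀⟩ := Finset.card_pos.1 (by omega : 0 < A.card)
    have h7 : 7 ≤ A.card := by
      have h1 := hd v₀ hv₀
      have h2 := hh v₀ hv₀
      omega
    have hstrict : (I3 G A).card ≤ (A.card - 3).choose 3 := by
      have hterm : ∀ v ∈ A, 3 * (A.card - 4) ≤ dg G A v * (A.card - 1 - dg G A v) := by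
        intro v hv
        have h1 := hd v hv
        have h2 := hh v hv
        have h2b := dg_le G hv
        have h3 := prod_lb 3 (dg G A v) (A.card - 1 - dg G A v) h1 (by omega)
        have h4 : 3 * (dg G A v + (A.card - 1 - dg G A v) - 3) = 3 * (A.card - 4) := by omega
        omega
      have hsum := Finset.card_nsmul_le_sum A _ _ hterm
      rw [smul_eq_mul] at hsum
      have hkey := key G A
      have hid := I3_add_B3 G A
      rw [chooseid (by omega : 1 ≤ A.card)] at hid
      have hid2 : (A.card - 1).choose 3 = (A.card - 2).choose 2 + (A.card - 2).choose 3 := by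
        have h0 := chooseid (n := A.card - 1) (by omega)
        rwa [show A.card - 1 - 1 = A.card - 2 by omega] at h0
      have hid3 : (A.card - 2).choose 3 = (A.card - 3).choose 2 + (A.card - 3).choose 3 := by
        have h0 := chooseid (n := A.card - 2) (by omega)
        rwa [show A.card - 2 - 1 = A.card - 3 by omega] at h0
      rw [hid2, hid3] at hid
      have h2c1 := choose2 (A.card - 1)
      rw [show A.card - 1 - 1 = A.card - 2 by omega] at h2c1
      have h2c2 := choose2 (A.card - 2)
      rw [show A.card - 2 - 1 = A.card - 3 by omega] at h2c2
      have h2c3 := choose2 (A.card - 3)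
      rw [show A.card - 3 - 1 = A.card - 4 by omega] at h2c3
      have hnum : (A.card - 1) * (A.card - 2) + (A.card - 2) * (A.card - 3)
          + (A.card - 3) * (A.card - 4) ≤ A.card * (3 * (A.card - 4)) := by
        obtain ⟨k, hk⟩ : ∃ k, A.card = k + 7 := ⟨A.card - 7, by omega⟩
        rw [hk, show k + 7 - 1 = k + 6 by omega, show k + 7 - 2 = k + 5 by omega,
          show k + 7 - 3 = k + 4 by omega, show k + 7 - 4 = k + 3 by omega]
        nlinarith [Nat.zero_le k]
      obtain ⟨P, hP⟩ : ∃ p, A.card * (3 * (A.card - 4)) = p := ⟨_, rfl⟩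
      obtain ⟨q1, hq1⟩ : ∃ q, (A.card - 1) * (A.card - 2) = q := ⟨_, rfl⟩
      obtain ⟨q2, hq2⟩ : ∃ q, (A.card - 2) * (A.card - 3) = q := ⟨_, rfl⟩
      obtain ⟨q3, hq3⟩ : ∃ q, (A.card - 3) * (A.card - 4) = q := ⟨_, rfl⟩
      rw [hP] at hsum hnum
      rw [hq1] at h2c1 hnum
      rw [hq2] at h2c2 hnum
      rw [hq3] at h2c3 hnum
      omega
    exact ⟨by omega, fun heq => absurd heq (by omega)⟩


def StructP (a b c : V) : Prop :=
  a ≠ b ∧ a ≠ c ∧ b ≠ c ∧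
  ∀ u v : V, G.Adj u v ↔ ¬(u ∈ ({a, b, c} : Finset V) ↔ v ∈ ({a, b, c} : Finset V))

lemma struct_count {a b c : V} (h : StructP G a b c) :
    (I3 G (univ : Finset V)).card = (Fintype.card V - 3).choose 3 + 1 := by
  obtain ⟨hab, hac, hbc, hiff⟩ := h
  set S : Finset V := {a, b, c} with hS
  have hScard : S.card = 3 := by
    rw [hS, Finset.card_insert_of_notMem (by simp [hab, hac]),
      Finset.card_insert_of_notMem (by simp [hbc]), Finset.card_singleton]
  have hsplit : I3 G (univ : Finset V) = S.powersetCard 3 ∪ Sᶜ.powersetCard 3 := by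
    ext s
    simp only [I3, Finset.mem_filter, Finset.mem_powersetCard, Finset.mem_union,
      Finset.subset_univ, true_and]
    constructor
    · rintro ⟨hc3, hind⟩
      by_cases hsub : s ⊆ S
      · exact Or.inl ⟨hsub, hc3⟩
      · refine Or.inr ⟨?_, hc3⟩
        intro v hv
        rw [Finset.mem_compl]
        intro hvS
        obtain ⟨u, hus, huS⟩ := Finset.not_subset.1 hsub
        exact hind v hv u hus ((hiff v u).2 (fun hi => huS (hi.1 hvS)))
    · rintro (⟨hsub, hc3⟩ | ⟨hsub, hc3⟩)
      · exact ⟨hc3, fun u hu v hv hadj =>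
          ((hiff u v).1 hadj) (iff_of_true (hsub hu) (hsub hv))⟩
      · exact ⟨hc3, fun u hu v hv hadj =>
          ((hiff u v).1 hadj) (iff_of_false (Finset.mem_compl.1 (hsub hu))
            (Finset.mem_compl.1 (hsub hv)))⟩
  have hdisj : Disjoint (S.powersetCard 3) (Sᶜ.powersetCard 3) := by
    rw [Finset.disjoint_left]
    intro s hs1 hs2
    rw [Finset.mem_powersetCard] at hs1 hs2
    obtain ⟨u, hu⟩ := Finset.card_pos.1 (by rw [hs1.2]; norm_num : 0 < s.card)
    exact (Finset.mem_compl.1 (hs2.1 hu)) (hs1.1 hu)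
  rw [hsplit, Finset.card_union_of_disjoint hdisj, Finset.card_powersetCard,
    Finset.card_powersetCard, hScard, Finset.card_compl, hScard, Nat.choose_self]
  omega

lemma struct_iso {a b c : V} (h : StructP G a b c) :
    Nonempty (G ≃g completeBipartiteGraph (Fin 3) (Fin (Fintype.card V - 3))) := by
  obtain ⟨hab, hac, hbc, hiff⟩ := h
  set S : Finset V := {a, b, c} with hS
  have hScard3 : S.card = 3 := by
    rw [hS, Finset.card_insert_of_notMem (by simp [hab, hac]),
      Finset.card_insert_of_notMem (by simp [hbc]), Finset.card_singleton]
  have hScard : Fintype.card {x // x ∈ S} = 3 := by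
    rw [Fintype.card_coe, hScard3]
  have hSccard : Fintype.card {x // ¬ x ∈ S} = Fintype.card V - 3 := by
    rw [Fintype.card_subtype_compl, hScard]
  let e1 : {x // x ∈ S} ≃ Fin 3 := Fintype.equivFinOfCardEq hScard
  let e2 : {x // ¬ x ∈ S} ≃ Fin (Fintype.card V - 3) := Fintype.equivFinOfCardEq hSccard
  let e : V ≃ (Fin 3 ⊕ Fin (Fintype.card V - 3)) :=
    (Equiv.sumCompl (· ∈ S)).symm.trans (Equiv.sumCongr e1 e2)
  refine ⟨⟨e, ?_⟩⟩
  intro u v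
  rw [hiff u v]
  by_cases hu : u ∈ S <;> by_cases hv : v ∈ S <;>
    simp [e, Equiv.sumCompl_symm_apply_of_pos, Equiv.sumCompl_symm_apply_of_neg, hu, hv]

lemma iso_struct {m : ℕ} (f : G ≃g completeBipartiteGraph (Fin 3) (Fin m)) :
    ∃ a b c : V, StructP G a b c := by
  let g := f.toEquiv
  have hinj := g.symm.injective
  refine ⟨g.symm (.inl 0), g.symm (.inl 1), g.symm (.inl 2),
    fun h0 => by simpa using hinj h0, fun h0 => by simpa using hinj h0,
    fun h0 => by simpa using hinj h0, ?_⟩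
  intro u v
  have hmem : ∀ x : V,
      (x ∈ ({g.symm (.inl 0), g.symm (.inl 1), g.symm (.inl 2)} : Finset V)) ↔ (g x).isLeft := by
    intro x
    simp only [Finset.mem_insert, Finset.mem_singleton]
    constructor
    · rintro (rfl | rfl | rfl) <;> simp
    · intro hL
      obtain ⟨i, hi⟩ := Sum.isLeft_iff.1 hL
      have hx : x = g.symm (.inl i) := by rw [← hi]; simp
      rcases i with ⟨iv, hlt⟩
      have : iv = 0 ∨ iv = 1 ∨ iv = 2 := by omega
      rcases this with rfl | rfl | rfl
      · exact Or.inl hx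
      · exact Or.inr (Or.inl hx)
      · exact Or.inr (Or.inr hx)
  have hadj : G.Adj u v ↔ (completeBipartiteGraph (Fin 3) (Fin m)).Adj (g u) (g v) :=
    f.map_rel_iff.symm
  rw [hadj, hmem u, hmem v]
  rcases hgu : g u with x | x <;> rcases hgv : g v with y | y <;> simp

end Aux

/-- For `n ≥ 6` and an `n`-vertex graph `G` of minimum degree at least 3,
`i_3(G) = C(n-3,3) + 1` iff `G` is isomorphic to `K_{3,n-3}`. -/
theorem stmt_6 {V : Type*} [Fintype V] (G : SimpleGraph V) (n : ℕ)
    (hn : Fintype.card V = n) (h6 : 6 ≤ n)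
    (hmin : ∀ v, 3 ≤ gdeg G v) :
    indepT G 3 = (n - 3).choose 3 + 1 ↔
      Nonempty (G ≃g completeBipartiteGraph (Fin 3) (Fin (n - 3))) := by
  subst hn
  classical
  have hindep : indepT G 3 = (Aux.I3 G (Finset.univ : Finset V)).card := by
    rw [indepT, Nat.card_eq_fintype_card, Fintype.card_subtype]
    congr 1
    ext s
    simp only [Finset.mem_filter, Finset.mem_univ, true_and, Aux.I3, Aux.nI,
      Finset.mem_powersetCard_univ]
  have hdg : ∀ v ∈ (Finset.univ : Finset V), 3 ≤ Aux.dg G Finset.univ v := by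
    intro v _
    have h1 := hmin v
    have h2 : gdeg G v = Aux.dg G Finset.univ v := by
      rw [gdeg, Set.ncard_eq_toFinset_card']
      unfold Aux.dg
      congr 1
      ext u
      simp [SimpleGraph.mem_neighborSet]
    omega
  have hcard : (Finset.univ : Finset V).card = Fintype.card V := Finset.card_univ
  obtain ⟨hle, heqstr⟩ := Aux.E3 G Finset.univ (by rw [hcard]; exact h6) hdg
  rw [hcard] at hle heqstr
  constructor
  · intro heq
    rw [hindep] at heq
    obtain ⟨a, _, b, _, c, _, hab, hac, hbc, hiff⟩ := heqstr heq
    exact Aux.struct_iso G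
      ⟨hab, hac, hbc, fun u v => hiff u (Finset.mem_univ u) v (Finset.mem_univ v)⟩
  · rintro ⟨f⟩
    obtain ⟨a, b, c, hstr⟩ := Aux.iso_struct G f
    rw [hindep, Aux.struct_count G hstr]
end

section
/- Let δ ≥ 2, t ≥ δ + 1, and let G be a graph on n vertices with minimum degree at least δ. If i_t(G) ≤ C(n-δ, t), then i_{t+1}(G) ≤ C(n-δ, t+1). Moreover, if in addition t < n − δ and i_t(G) < C(n-δ, t), then i_{t+1}(G) < C(n-δ, t+1). -/
open SimpleGraph

open Finset in
lemma indepT_eq_card {V : Type*} [Fintype V] [DecidableEq V] (G : SimpleGraph V)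
    [DecidableRel G.Adj] (t : ℕ) :
    indepT G t =
      (univ.filter (fun s : Finset V => s.card = t ∧ ∀ u ∈ s, ∀ v ∈ s, ¬ G.Adj u v)).card := by
  classical
  rw [indepT, Nat.card_eq_fintype_card, Fintype.card_subtype]

open Finset in
lemma key_count {V : Type*} [Fintype V] (G : SimpleGraph V) (δ n t : ℕ)
    (hn : Fintype.card V = n) (hmin : ∀ v, δ ≤ gdeg G v) (ht : 1 ≤ t) :
    (t + 1) * indepT G (t + 1) ≤ (n - δ - t) * indepT G t := by
  classical
  set I : ℕ → Finset (Finset V) :=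
    fun k => univ.filter (fun s : Finset V => s.card = k ∧ ∀ u ∈ s, ∀ v ∈ s, ¬ G.Adj u v) with hI
  have hmemI : ∀ k (s : Finset V), s ∈ I k ↔
      (s.card = k ∧ ∀ u ∈ s, ∀ v ∈ s, ¬ G.Adj u v) := by
    intro k s; simp [hI]
  set ext : Finset V → Finset V :=
    fun S => univ.filter (fun v => v ∉ S ∧ ∀ u ∈ S, ¬ G.Adj u v) with hext
  -- A : pairs (T, v) with T an independent (t+1)-set and v ∈ T
  set A : Finset (Σ _ : Finset V, V) := (I (t + 1)).sigma (fun T => T) with hA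
  set B : Finset (Σ _ : Finset V, V) := (I t).sigma ext with hB
  have hcardA : A.card = (t + 1) * (I (t + 1)).card := by
    rw [hA, Finset.card_sigma]
    rw [Finset.sum_congr rfl (fun T hT => ((hmemI _ T).1 hT).1)]
    simp [mul_comm]
  have hAB : A.card ≤ B.card := by
    apply Finset.card_le_card_of_injOn (fun p => ⟨p.1.erase p.2, p.2⟩)
    · rintro ⟨T, v⟩ hp
      rw [hA, Finset.mem_coe, Finset.mem_sigma] at hp
      obtain ⟨hT, hv⟩ := hp
      obtain ⟨hTcard, hTind⟩ := (hmemI _ T).1 hT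
      rw [hB, Finset.mem_coe, Finset.mem_sigma]
      constructor
      · rw [hmemI]
        refine ⟨?_, ?_⟩
        · rw [Finset.card_erase_of_mem hv, hTcard]
          omega
        · intro u hu w hw
          exact hTind u (Finset.mem_of_mem_erase hu) w (Finset.mem_of_mem_erase hw)
      · rw [hext]
        simp only [Finset.mem_filter, Finset.mem_univ, true_and]
        refine ⟨Finset.notMem_erase _ _, ?_⟩
        intro u hu
        exact hTind u (Finset.mem_of_mem_erase hu) v hv
    · rintro ⟨T, v⟩ hp ⟨T', v'⟩ hp' heq
      simp only [hA, Finset.mem_coe, Finset.mem_sigma] at hp hp'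
      have hv : v = v' := congrArg Sigma.snd heq
      have hS : T.erase v = T'.erase v' := congrArg Sigma.fst heq
      subst hv
      have : T = T' := by
        rw [← Finset.insert_erase hp.2, hS, Finset.insert_erase hp'.2]
      simp [this]
  have hcardB : B.card ≤ (I t).card * (n - δ - t) := by
    rw [hB, Finset.card_sigma]
    calc ∑ S ∈ I t, (ext S).card ≤ ∑ S ∈ I t, (n - δ - t) := by
          apply Finset.sum_le_sum
          intro S hS
          obtain ⟨hScard, hSind⟩ := (hmemI _ S).1 hS
          have hne : S.Nonempty := by
            rw [← Finset.card_pos, hScard]; omega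
          obtain ⟨u, hu⟩ := hne
          have hsub : ext S ⊆ univ \ (S ∪ G.neighborFinset u) := by
            intro v hv
            rw [hext, Finset.mem_filter] at hv
            obtain ⟨-, hvS, hvadj⟩ := hv
            rw [Finset.mem_sdiff]
            refine ⟨Finset.mem_univ _, ?_⟩
            rw [Finset.mem_union]
            rintro (h | h)
            · exact hvS h
            · exact hvadj u hu (by rwa [SimpleGraph.mem_neighborFinset] at h)
          have hdisj : Disjoint S (G.neighborFinset u) := by
            rw [Finset.disjoint_left]
            intro w hw hwN
            rw [SimpleGraph.mem_neighborFinset] at hwN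
            exact hSind u hu w hw hwN
          have hdeg : δ ≤ (G.neighborFinset u).card := by
            have := hmin u
            rwa [gdeg, Set.ncard_eq_toFinset_card'] at this
          calc (ext S).card ≤ (univ \ (S ∪ G.neighborFinset u)).card :=
                Finset.card_le_card hsub
            _ = Fintype.card V - (S ∪ G.neighborFinset u).card := Finset.card_univ_diff _
            _ = n - (S.card + (G.neighborFinset u).card) := by
                rw [hn, Finset.card_union_of_disjoint hdisj]
            _ ≤ n - δ - t := by rw [hScard]; omega
      _ = (I t).card * (n - δ - t) := by rw [Finset.sum_const, smul_eq_mul]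
  have e1 : indepT G (t + 1) = (I (t + 1)).card := indepT_eq_card G (t + 1)
  have e2 : indepT G t = (I t).card := indepT_eq_card G t
  rw [e1, e2, ← hcardA, mul_comm]
  exact le_trans hAB hcardB

/-- For `δ ≥ 2`, `t ≥ δ+1` and an `n`-vertex graph `G` of minimum degree at least `δ`:
if `i_t(G) ≤ C(n-δ,t)` then `i_{t+1}(G) ≤ C(n-δ,t+1)`; and if moreover `t < n-δ` and
`i_t(G) < C(n-δ,t)` then `i_{t+1}(G) < C(n-δ,t+1)`. -/
theorem stmt_11 {V : Type*} [Fintype V] (G : SimpleGraph V) (δ n t : ℕ)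
    (hδ : 2 ≤ δ) (ht : δ + 1 ≤ t) (hn : Fintype.card V = n)
    (hmin : ∀ v, δ ≤ gdeg G v) :
    (indepT G t ≤ (n - δ).choose t → indepT G (t + 1) ≤ (n - δ).choose (t + 1)) ∧
    (t < n - δ → indepT G t < (n - δ).choose t →
      indepT G (t + 1) < (n - δ).choose (t + 1)) := by
  have key : (t + 1) * indepT G (t + 1) ≤ (n - δ - t) * indepT G t :=
    key_count G δ n t hn hmin (by omega)
  set m := n - δ with hm
  have hmt : n - δ - t = m - t := rfl
  have hbin : m.choose (t + 1) * (t + 1) = m.choose t * (m - t) :=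
    Nat.choose_succ_right_eq m t
  constructor
  · intro h
    have h1 : (t + 1) * indepT G (t + 1) ≤ (t + 1) * m.choose (t + 1) := by
      calc (t + 1) * indepT G (t + 1) ≤ (m - t) * indepT G t := key
        _ ≤ (m - t) * m.choose t := Nat.mul_le_mul_left _ h
        _ = (t + 1) * m.choose (t + 1) := by rw [mul_comm, ← hbin]; ring
    exact Nat.le_of_mul_le_mul_left h1 (by omega)
  · intro htm h
    have hpos : 0 < m - t := by omega
    have h1 : (t + 1) * indepT G (t + 1) < (t + 1) * m.choose (t + 1) := by
      calc (t + 1) * indepT G (t + 1) ≤ (m - t) * indepT G t := key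
        _ < (m - t) * m.choose t := mul_lt_mul_of_pos_left h hpos
        _ = (t + 1) * m.choose (t + 1) := by rw [mul_comm, ← hbin]; ring
    exact Nat.lt_of_mul_lt_mul_left h1
end

section
/- Let n ≥ 7 and let G be a 3-regular graph on n vertices. Then i_3(G) < C(n-3, 3) + 1. More generally, for any δ ≥ 1 and any δ-regular graph G on n vertices, i_3(G) ≤ C(n-δ, 3) + C(δ, 3). -/
open SimpleGraph

section Aux
open Finset
open scoped Classical

lemma two_choose_two (x : ℕ) : 2 * (x.choose 2 : ℤ) = x * (x - 1) := by
  induction x with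
  | zero => simp
  | succ n ih =>
    rw [Nat.choose_succ_succ, Nat.choose_one_right]
    push_cast
    push_cast at ih
    nlinarith [ih]

lemma six_choose_three (x : ℕ) : 6 * (x.choose 3 : ℤ) = x * (x - 1) * (x - 2) := by
  induction x with
  | zero => simp
  | succ n ih =>
    rw [Nat.choose_succ_succ]
    have h2 := two_choose_two n
    push_cast
    push_cast at ih h2
    nlinarith [ih, h2]

lemma indepT_eq {V : Type} [Fintype V] (G : SimpleGraph V) :
    indepT G 3 = (univ.filter (fun s : Finset V =>
      s.card = 3 ∧ ∀ u ∈ s, ∀ w ∈ s, ¬ G.Adj u w)).card := by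
  rw [indepT, Nat.card_eq_fintype_card, Fintype.card_subtype]

lemma gdeg_eq {V : Type} [Fintype V] (G : SimpleGraph V) (v : V) :
    gdeg G v = (univ.filter (G.Adj v ·)).card := by
  have h : G.neighborSet v = ↑(univ.filter (G.Adj v ·)) := by
    ext u; simp [SimpleGraph.neighborSet]
  rw [gdeg, h, Set.ncard_coe_finset]

-- sum over a set as sum over univ with membership indicator
lemma sum_mem_univ {V : Type} [Fintype V] (s : Finset V) (f : V → ℕ) :
    ∑ u ∈ s, f u = ∑ u ∈ univ, if u ∈ s then f u else 0 := by
  rw [Finset.sum_ite_mem]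
  simp

-- S2 fiber bound
lemma fiber_ge {V : Type} [Fintype V] (G : SimpleGraph V) {u w : V} (h : G.Adj u w) :
    Fintype.card V - 2 ≤
      ((univ.powersetCard 3 : Finset (Finset V)).filter (fun s => u ∈ s ∧ w ∈ s)).card := by
  classical
  have huw : u ≠ w := G.ne_of_adj h
  have hcard : (univ \ ({u, w} : Finset V)).card = Fintype.card V - 2 := by
    rw [Finset.card_sdiff_of_subset (Finset.subset_univ _), Finset.card_univ]
    simp [huw]
  rw [← hcard]
  apply Finset.card_le_card_of_injOn (fun x => insert u (insert w {x}))
  · intro x hx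
    simp only [Finset.mem_coe, Finset.mem_sdiff, Finset.mem_insert, Finset.mem_singleton, not_or] at hx
    obtain ⟨-, hxu, hxw⟩ := hx
    simp only [Finset.mem_coe, Finset.mem_filter, Finset.mem_powersetCard_univ, Finset.mem_insert,
      Finset.mem_singleton]
    refine ⟨?_, by simp, by simp⟩
    rw [Finset.card_insert_of_notMem (by simp [huw, Ne.symm hxu]),
      Finset.card_insert_of_notMem (by simp [Ne.symm hxw]), Finset.card_singleton]
  · intro x hx y hy hxy
    simp only [Finset.coe_sdiff, Finset.coe_univ, Set.mem_diff, Set.mem_univ, true_and,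
      Finset.coe_insert, Set.mem_insert_iff, Finset.coe_singleton, Set.mem_singleton_iff,
      not_or, Finset.mem_coe, Finset.mem_sdiff, Finset.mem_insert, Finset.mem_singleton] at hx hy
    have : x ∈ insert u (insert w ({y} : Finset V)) := by
      have := hxy
      simp only at this
      rw [← this]; simp
    simp only [Finset.mem_insert, Finset.mem_singleton] at this
    rcases this with h1 | h1 | h1
    · exact absurd h1 hx.1
    · exact absurd h1 hx.2
    · exact h1


lemma pointwise {V : Type} [Fintype V] (G : SimpleGraph V) (s : Finset V) (hs : s.card = 3) :
    (if (∀ u ∈ s, ∀ w ∈ s, ¬ G.Adj u w) then 2 else 0)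
      + ∑ u ∈ s, ∑ w ∈ s, (if G.Adj u w then 1 else 0)
    ≤ 2 + 2 * ∑ v ∈ s, (if (∀ u ∈ s, u ≠ v → G.Adj v u) then 1 else 0) := by
  obtain ⟨a, b, c, hab, hac, hbc, rfl⟩ := Finset.card_eq_three.mp hs
  by_cases h1 : G.Adj a b
  all_goals by_cases h2 : G.Adj a c
  all_goals by_cases h3 : G.Adj b c
  all_goals
    have h1' : G.Adj b a ↔ G.Adj a b := G.adj_comm b a
    have h2' : G.Adj c a ↔ G.Adj a c := G.adj_comm c a
    have h3' : G.Adj c b ↔ G.Adj b c := G.adj_comm c b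
  all_goals
    simp_all [Finset.sum_insert, Finset.mem_insert, hab, hac, hbc, Ne.symm hab,
      Ne.symm hac, Ne.symm hbc, G.irrefl, -Finset.sum_boole]

lemma center_fiber_le {V : Type} [Fintype V] (G : SimpleGraph V) (v : V) :
    ((univ.powersetCard 3 : Finset (Finset V)).filter
        (fun s => v ∈ s ∧ ∀ u ∈ s, u ≠ v → G.Adj v u)).card
      ≤ ((univ.filter (G.Adj v ·)).powersetCard 2).card := by
  classical
  apply Finset.card_le_card_of_injOn (fun s => s.erase v)
  · intro s hs
    simp only [Finset.mem_coe, Finset.mem_filter, Finset.mem_powersetCard_univ] at hs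
    obtain ⟨h3, hv, hctr⟩ := hs
    simp only [Finset.mem_coe, Finset.mem_powersetCard]
    constructor
    · intro u hu
      simp only [Finset.mem_erase] at hu
      simp only [Finset.mem_filter, Finset.mem_univ, true_and]
      exact hctr u hu.2 hu.1
    · rw [Finset.card_erase_of_mem hv, h3]
  · intro s hs t ht hst
    simp only [Finset.mem_coe, Finset.mem_filter, Finset.mem_powersetCard_univ] at hs ht
    simp only at hst
    rw [← Finset.insert_erase hs.2.1, ← Finset.insert_erase ht.2.1, hst]

lemma star {V : Type} [Fintype V] (G : SimpleGraph V) (δ : ℕ) (hreg : ∀ v, gdeg G v = δ) :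
    2 * (univ.filter (fun s : Finset V =>
        s.card = 3 ∧ ∀ u ∈ s, ∀ w ∈ s, ¬ G.Adj u w)).card
      + Fintype.card V * δ * (Fintype.card V - 2)
    ≤ 2 * (Fintype.card V).choose 3 + 2 * (Fintype.card V * δ.choose 2) := by
  classical
  set n := Fintype.card V with hn
  set T3 : Finset (Finset V) := univ.powersetCard 3 with hT3
  set k : Finset V → ℕ := fun s => ∑ u ∈ s, ∑ w ∈ s, if G.Adj u w then 1 else 0 with hk
  set c : Finset V → ℕ := fun s =>
    ∑ v ∈ s, if (∀ u ∈ s, u ≠ v → G.Adj v u) then 1 else 0 with hc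
  -- pointwise inequality summed
  have key : ∑ s ∈ T3, ((if (∀ u ∈ s, ∀ w ∈ s, ¬ G.Adj u w) then 2 else 0) + k s)
      ≤ ∑ s ∈ T3, (2 + 2 * c s) := by
    apply Finset.sum_le_sum
    intro s hs
    have hs3 : s.card = 3 := (Finset.mem_powersetCard_univ.mp hs)
    exact pointwise G s hs3
  -- (A)
  have hA : ∑ s ∈ T3, (if (∀ u ∈ s, ∀ w ∈ s, ¬ G.Adj u w) then (2:ℕ) else 0)
      = 2 * (univ.filter (fun s : Finset V =>
          s.card = 3 ∧ ∀ u ∈ s, ∀ w ∈ s, ¬ G.Adj u w)).card := by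
    rw [Finset.sum_ite, Finset.sum_const, Finset.sum_const]
    have : T3.filter (fun s => ∀ u ∈ s, ∀ w ∈ s, ¬ G.Adj u w)
        = univ.filter (fun s : Finset V => s.card = 3 ∧ ∀ u ∈ s, ∀ w ∈ s, ¬ G.Adj u w) := by
      ext s
      simp only [hT3, Finset.mem_filter, Finset.mem_powersetCard_univ, Finset.mem_univ, true_and]
      try tauto
    rw [this]
    ring
  -- (B)
  have hB : n * δ * (n - 2) ≤ ∑ s ∈ T3, k s := by
    have hrw : ∀ s : Finset V, k s = ∑ u ∈ (univ : Finset V), ∑ w ∈ (univ : Finset V),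
        (if G.Adj u w then (if u ∈ s ∧ w ∈ s then 1 else 0) else 0) := by
      intro s
      rw [hk]
      simp only
      rw [sum_mem_univ s]
      apply Finset.sum_congr rfl
      intro u _
      by_cases hu : u ∈ s
      · simp only [hu, if_true]
        rw [sum_mem_univ s]
        apply Finset.sum_congr rfl
        intro w _
        split_ifs <;> simp_all
      · simp only [hu, if_false]
        rw [eq_comm, Finset.sum_eq_zero]
        intro w _
        split_ifs <;> simp_all
    have hswap : ∑ s ∈ T3, k s = ∑ u ∈ (univ : Finset V), ∑ w ∈ (univ : Finset V),
        (if G.Adj u w then (T3.filter (fun s => u ∈ s ∧ w ∈ s)).card else 0) := by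
      calc ∑ s ∈ T3, k s
          = ∑ s ∈ T3, ∑ u ∈ (univ : Finset V), ∑ w ∈ (univ : Finset V),
            (if G.Adj u w then (if u ∈ s ∧ w ∈ s then 1 else 0) else 0) :=
            Finset.sum_congr rfl (fun s _ => hrw s)
        _ = ∑ u ∈ (univ : Finset V), ∑ s ∈ T3, ∑ w ∈ (univ : Finset V),
            (if G.Adj u w then (if u ∈ s ∧ w ∈ s then 1 else 0) else 0) := Finset.sum_comm
        _ = ∑ u ∈ (univ : Finset V), ∑ w ∈ (univ : Finset V), ∑ s ∈ T3,
            (if G.Adj u w then (if u ∈ s ∧ w ∈ s then 1 else 0) else 0) := by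
            exact Finset.sum_congr rfl (fun u _ => Finset.sum_comm)
        _ = ∑ u ∈ (univ : Finset V), ∑ w ∈ (univ : Finset V),
            (if G.Adj u w then (T3.filter (fun s => u ∈ s ∧ w ∈ s)).card else 0) := by
            apply Finset.sum_congr rfl; intro u _
            apply Finset.sum_congr rfl; intro w _
            by_cases h : G.Adj u w
            · simp only [h, if_true, Finset.card_filter]
            · simp only [h, if_false, Finset.sum_const_zero]
    rw [hswap]
    have step : ∀ u : V, n * δ * (n-2) = ∑ u ∈ (univ:Finset V), δ * (n-2) := by
      intro u; rw [Finset.sum_const, Finset.card_univ, smul_eq_mul, ← hn, mul_assoc]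
    calc n * δ * (n - 2) = ∑ u ∈ (univ : Finset V), δ * (n - 2) := by
          rw [Finset.sum_const, Finset.card_univ, smul_eq_mul, ← hn, mul_assoc]
      _ ≤ ∑ u ∈ (univ : Finset V), ∑ w ∈ (univ : Finset V),
          (if G.Adj u w then (T3.filter (fun s => u ∈ s ∧ w ∈ s)).card else 0) := by
          apply Finset.sum_le_sum
          intro u _
          have : δ * (n - 2) = ∑ w ∈ univ.filter (G.Adj u ·), (n - 2) := by
            rw [Finset.sum_const, smul_eq_mul, ← gdeg_eq G u, hreg u]
          rw [this, ← Finset.sum_filter]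
          apply Finset.sum_le_sum
          intro w hw
          simp only [Finset.mem_filter] at hw
          exact fiber_ge G hw.2
  -- (C)
  have hC : ∑ s ∈ T3, c s ≤ n * δ.choose 2 := by
    have hrw : ∀ s : Finset V, s ∈ T3 → c s = ∑ v ∈ (univ : Finset V),
        (if v ∈ s ∧ ∀ u ∈ s, u ≠ v → G.Adj v u then 1 else 0) := by
      intro s _
      rw [hc]
      simp only
      rw [sum_mem_univ s]
      apply Finset.sum_congr rfl
      intro v _
      split_ifs <;> simp_all
    calc ∑ s ∈ T3, c s
        = ∑ s ∈ T3, ∑ v ∈ (univ : Finset V),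
          (if v ∈ s ∧ ∀ u ∈ s, u ≠ v → G.Adj v u then 1 else 0) :=
          Finset.sum_congr rfl hrw
      _ = ∑ v ∈ (univ : Finset V), ∑ s ∈ T3,
          (if v ∈ s ∧ ∀ u ∈ s, u ≠ v → G.Adj v u then 1 else 0) := Finset.sum_comm
      _ = ∑ v ∈ (univ : Finset V),
          (T3.filter (fun s => v ∈ s ∧ ∀ u ∈ s, u ≠ v → G.Adj v u)).card := by
          apply Finset.sum_congr rfl; intro v _
          rw [Finset.card_filter]
      _ ≤ ∑ v ∈ (univ : Finset V), ((univ.filter (G.Adj v ·)).powersetCard 2).card :=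
          Finset.sum_le_sum (fun v _ => center_fiber_le G v)
      _ = n * δ.choose 2 := by
          have : ∀ v : V, ((univ.filter (G.Adj v ·)).powersetCard 2).card = δ.choose 2 := by
            intro v
            rw [Finset.card_powersetCard, ← gdeg_eq G v, hreg v]
          rw [Finset.sum_congr rfl (fun v _ => this v), Finset.sum_const, Finset.card_univ,
            smul_eq_mul, ← hn]
  -- combine
  have hT3card : T3.card = n.choose 3 := by
    rw [hT3, Finset.card_powersetCard, Finset.card_univ, ← hn]
  have hsplit : ∑ s ∈ T3, (2 + 2 * c s) = 2 * T3.card + 2 * ∑ s ∈ T3, c s := by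
    rw [Finset.sum_add_distrib, Finset.sum_const, smul_eq_mul, Finset.mul_sum]
    ring
  rw [Finset.sum_add_distrib, hA] at key
  omega

lemma bndB {V : Type} [Fintype V] (G : SimpleGraph V) (δ : ℕ) (hreg : ∀ v, gdeg G v = δ) :
    3 * (univ.filter (fun s : Finset V =>
        s.card = 3 ∧ ∀ u ∈ s, ∀ w ∈ s, ¬ G.Adj u w)).card
      ≤ Fintype.card V * (Fintype.card V - 1 - δ).choose 2 := by
  classical
  set n := Fintype.card V with hn
  set I : Finset (Finset V) := univ.filter (fun s : Finset V =>
      s.card = 3 ∧ ∀ u ∈ s, ∀ w ∈ s, ¬ G.Adj u w) with hI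
  have hnonnbr : ∀ v : V, (univ.filter (fun u => u ≠ v ∧ ¬G.Adj v u)).card = n - 1 - δ := by
    intro v
    have he : univ.filter (fun u => u ≠ v ∧ ¬G.Adj v u)
        = univ \ insert v (univ.filter (G.Adj v ·)) := by
      ext u
      simp only [Finset.mem_filter, Finset.mem_univ, true_and, Finset.mem_sdiff,
        Finset.mem_insert, not_or]
      try tauto
    rw [he, Finset.card_sdiff_of_subset (Finset.subset_univ _), Finset.card_univ,
      Finset.card_insert_of_notMem (by simp [G.irrefl]), ← gdeg_eq G v, hreg v, ← hn]
    omega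
  have key : ∀ v : V, ((I.filter (fun s => v ∈ s)).card)
      ≤ ((univ.filter (fun u => u ≠ v ∧ ¬G.Adj v u)).powersetCard 2).card := by
    intro v
    apply Finset.card_le_card_of_injOn (fun s => s.erase v)
    · intro s hs
      simp only [Finset.mem_coe, Finset.mem_filter, hI, Finset.mem_univ, true_and] at hs
      obtain ⟨⟨h3, hind⟩, hv⟩ := hs
      simp only [Finset.mem_coe, Finset.mem_powersetCard]
      constructor
      · intro u hu
        simp only [Finset.mem_erase] at hu
        simp only [Finset.mem_filter, Finset.mem_univ, true_and]
        exact ⟨hu.1, fun h => hind v hv u hu.2 h⟩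
      · rw [Finset.card_erase_of_mem hv, h3]
    · intro s hs t ht hst
      simp only [Finset.mem_coe, Finset.mem_filter] at hs ht
      simp only at hst
      rw [← Finset.insert_erase hs.2, ← Finset.insert_erase ht.2, hst]
  calc 3 * I.card = ∑ s ∈ I, s.card := by
        rw [eq_comm]
        rw [Finset.sum_congr rfl (fun s hs => by
          simp only [hI, Finset.mem_filter] at hs
          exact hs.2.1), Finset.sum_const, smul_eq_mul, mul_comm]
    _ = ∑ s ∈ I, ∑ v ∈ (univ : Finset V), (if v ∈ s then 1 else 0) := by
        apply Finset.sum_congr rfl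
        intro s _
        rw [Finset.card_eq_sum_ones, sum_mem_univ s (fun _ => 1)]
    _ = ∑ v ∈ (univ : Finset V), ∑ s ∈ I, (if v ∈ s then 1 else 0) := Finset.sum_comm
    _ = ∑ v ∈ (univ : Finset V), (I.filter (fun s => v ∈ s)).card := by
        apply Finset.sum_congr rfl; intro v _
        rw [Finset.card_filter]
    _ ≤ ∑ v ∈ (univ : Finset V),
        ((univ.filter (fun u => u ≠ v ∧ ¬G.Adj v u)).powersetCard 2).card :=
        Finset.sum_le_sum (fun v _ => key v)
    _ = n * (n - 1 - δ).choose 2 := by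
        rw [Finset.sum_congr rfl (fun v _ => by
          rw [Finset.card_powersetCard, hnonnbr v]), Finset.sum_const, Finset.card_univ,
          smul_eq_mul, ← hn]

end Aux

open Finset
open scoped Classical

/-- Every 3-regular graph on `n ≥ 7` vertices has strictly fewer than `C(n-3,3) + 1`
independent sets of size 3; more generally, every `δ`-regular graph on `n` vertices has
at most `C(n-δ,3) + C(δ,3)` independent sets of size 3. -/
theorem stmt_18 :
    (∀ (n : ℕ) (V : Type) [Fintype V] (G : SimpleGraph V),
      7 ≤ n → Fintype.card V = n → (∀ v, gdeg G v = 3) →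
      indepT G 3 < (n - 3).choose 3 + 1) ∧
    (∀ (δ n : ℕ) (V : Type) [Fintype V] (G : SimpleGraph V),
      1 ≤ δ → Fintype.card V = n → (∀ v, gdeg G v = δ) →
      indepT G 3 ≤ (n - δ).choose 3 + δ.choose 3) := by
  constructor
  · -- strict bound for 3-regular graphs on n ≥ 7 vertices
    intro n V _ G hn7 hcard hreg
    have hstar := star G 3 hreg
    rw [← indepT_eq, hcard] at hstar
    have h2n : 2 ≤ n := by omega
    zify [h2n] at hstar
    have hM : ((n - 3 : ℕ) : ℤ) = (n : ℤ) - 3 := by omega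
    have h3 := six_choose_three (n - 3)
    have h4 := six_choose_three n
    rw [hM] at h3
    have hN7 : (7 : ℤ) ≤ (n : ℤ) := by exact_mod_cast hn7
    have hc32 : ((Nat.choose 3 2 : ℕ) : ℤ) = 3 := by norm_num
    have final : (indepT G 3 : ℤ) < ((n - 3).choose 3 : ℤ) + 1 := by
      nlinarith [hstar, h3, h4, hc32]
    exact_mod_cast final
  · -- general bound for δ-regular graphs
    intro δ n V _ G hδ hcard hreg
    have hstar := star G δ hreg
    rw [← indepT_eq, hcard] at hstar
    by_cases hV : Nonempty V
    · obtain ⟨v⟩ := hV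
      have hδn : δ + 1 ≤ n := by
        have h1 : (insert v (univ.filter (G.Adj v ·))).card ≤ Fintype.card V :=
          Finset.card_le_univ _
        rw [Finset.card_insert_of_notMem (by simp [G.irrefl]), ← gdeg_eq, hreg, hcard] at h1
        omega
      have h2n : 2 ≤ n := by omega
      have hD1 : (1 : ℤ) ≤ (δ : ℤ) := by exact_mod_cast hδ
      have hDN : (δ : ℤ) + 1 ≤ (n : ℤ) := by exact_mod_cast hδn
      have hM : ((n - δ : ℕ) : ℤ) = (n : ℤ) - (δ : ℤ) := by omega
      have h3 := six_choose_three (n - δ)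
      have h5 := six_choose_three δ
      rw [hM] at h3
      rcases le_or_gt (2 * δ) n with hge | hlt
      · -- n ≥ 2δ : use the main counting bound
        zify [h2n] at hstar
        have h4 := six_choose_three n
        have h6 := two_choose_two δ
        have hge' : 2 * (δ : ℤ) ≤ (n : ℤ) := by exact_mod_cast hge
        have final : (indepT G 3 : ℤ) ≤ ((n - δ).choose 3 : ℤ) + (δ.choose 3 : ℤ) := by
          nlinarith [hstar, h3, h4, h5, h6,
            mul_nonneg (by linarith : (0:ℤ) ≤ (δ:ℤ)) (by linarith : (0:ℤ) ≤ (n:ℤ) - 2 * δ)]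
        exact_mod_cast final
      · -- n < 2δ : use the complement cherry bound
        have hb := bndB G δ hreg
        rw [← indepT_eq, hcard] at hb
        zify at hb
        have h7 := two_choose_two (n - 1 - δ)
        have hM' : ((n - 1 - δ : ℕ) : ℤ) = (n : ℤ) - 1 - (δ : ℤ) := by omega
        rw [hM'] at h7
        have hlt' : (n : ℤ) < 2 * (δ : ℤ) := by exact_mod_cast hlt
        have final : (indepT G 3 : ℤ) ≤ ((n - δ).choose 3 : ℤ) + (δ.choose 3 : ℤ) := by
          nlinarith [hb, h3, h5, h7,
            mul_nonneg (mul_nonneg (by linarith : (0:ℤ) ≤ (δ:ℤ))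
              (by linarith : (0:ℤ) ≤ 2 * (δ:ℤ) - (n:ℤ)))
              (by linarith : (0:ℤ) ≤ (n:ℤ) - 3)]
        exact_mod_cast final
    · -- V is empty
      have h0 : n = 0 := by
        rw [← hcard]
        exact Fintype.card_eq_zero_iff.mpr (not_nonempty_iff.mp hV)
      subst h0
      have hz : indepT G 3 = 0 := by
        have hc : (0:ℕ).choose 3 = 0 := rfl
        simp only [hc, Nat.zero_sub, zero_mul, mul_zero, add_zero, Nat.le_zero,
          Nat.mul_eq_zero] at hstar
        omega
      rw [hz]
      exact Nat.zero_le _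
end

section
/- Let δ ≥ 1 and n ≥ δ + 1 with n − δ dividing n, and let G be a graph on n vertices with minimum degree at least δ. Then for every t with 1 ≤ t ≤ n − δ, i_t(G) ≤ (n/(n-δ)) · C(n-δ, t); this upper bound equals the number of independent sets of size t in the complete multipartite graph with n/(n-δ) parts, each of size n − δ. -/
open SimpleGraph

lemma indepT_eq_filter_card {V : Type*} [Fintype V] (G : SimpleGraph V) (t : ℕ)
    (p : Finset V → Prop) [DecidablePred p]
    (hp : ∀ s, p s ↔ (s.card = t ∧ ∀ u ∈ s, ∀ v ∈ s, ¬ G.Adj u v)) :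
    indepT G t = (Finset.univ.filter p).card := by
  classical
  rw [indepT, Nat.card_eq_fintype_card, Fintype.card_subtype]
  congr 1
  ext S
  simp [hp]

private def partEmb (q s : ℕ) (i : Fin q) : Fin s ↪ ((_ : Fin q) × Fin s) :=
  ⟨fun x => ⟨i, x⟩, fun a b h => congrArg Sigma.snd h⟩

private lemma sigma_eq {q s : ℕ} (a : (_ : Fin q) × Fin s) (i : Fin q) (h : a.1 = i) :
    a = ⟨i, a.2⟩ := by
  cases a; cases h; rfl

/-- For `δ ≥ 1`, `n ≥ δ+1` with `(n-δ) ∣ n`, every `n`-vertex graph of minimum degree at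
least `δ` satisfies, for all `1 ≤ t ≤ n-δ`, `i_t(G) ≤ (n/(n-δ))·C(n-δ,t)`; and this bound
is the number of independent sets of size `t` in the complete multipartite graph with
`n/(n-δ)` parts each of size `n-δ`. -/
theorem stmt_19 {V : Type*} [Fintype V] (G : SimpleGraph V) (δ n : ℕ)
    (hδ : 1 ≤ δ) (hn : Fintype.card V = n) (hn1 : δ + 1 ≤ n) (hdvd : (n - δ) ∣ n)
    (hmin : ∀ v, δ ≤ gdeg G v) (t : ℕ) (ht1 : 1 ≤ t) (ht2 : t ≤ n - δ) :
    indepT G t ≤ n / (n - δ) * (n - δ).choose t ∧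
    n / (n - δ) * (n - δ).choose t =
      indepT (completeMultipartiteGraph fun _ : Fin (n / (n - δ)) => Fin (n - δ)) t := by
  classical
  set s := n - δ with hs
  set q := n / (n - δ) with hq
  have hqs : q * s = n := Nat.div_mul_cancel hdvd
  have hs1 : 1 ≤ s := le_trans ht1 ht2
  constructor
  · -- upper bound by double counting
    set I : Finset (Finset V) :=
      Finset.univ.filter (fun S : Finset V => S.card = t ∧ ∀ u ∈ S, ∀ v ∈ S, ¬ G.Adj u v) with hI
    have hIcard : indepT G t = I.card := indepT_eq_filter_card G t _ (fun _ => Iff.rfl)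
    have hdeg : ∀ v : V, (Finset.univ.filter (fun u => ¬ G.Adj v u)).card ≤ s := by
      intro v
      have h1 : (Finset.univ.filter (fun u => G.Adj v u)).card = gdeg G v := by
        rw [gdeg, Set.ncard_eq_toFinset_card']
        congr 1
        ext u
        simp [SimpleGraph.neighborSet]
        exact Set.mem_toFinset.symm
      have h2 := Finset.card_filter_add_card_filter_not
        (s := (Finset.univ : Finset V)) (fun u => G.Adj v u)
      rw [Finset.card_univ, hn, h1] at h2
      have h3 := hmin v
      omega
    -- per-vertex count
    have hvert : ∀ v : V, (I.filter (fun S => v ∈ S)).card ≤ (s - 1).choose (t - 1) := by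
      intro v
      set B : Finset V := (Finset.univ.filter (fun u => ¬ G.Adj v u)).erase v with hB
      have hBcard : B.card ≤ s - 1 := by
        have hv : v ∈ Finset.univ.filter (fun u => ¬ G.Adj v u) := by
          simp [G.loopless.irrefl v]
        have h := Finset.card_erase_of_mem hv
        rw [← hB] at h
        have := hdeg v
        omega
      calc (I.filter (fun S => v ∈ S)).card
          ≤ (B.powersetCard (t - 1)).card := by
            apply Finset.card_le_card_of_injOn (fun S => S.erase v)
            · intro S hS
              simp only [Finset.mem_coe, Finset.mem_filter, hI] at hS
              obtain ⟨⟨-, hcard, hind⟩, hv⟩ := hS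
              rw [Finset.mem_coe, Finset.mem_powersetCard]
              constructor
              · intro u hu
                rw [Finset.mem_erase] at hu ⊢
                refine ⟨hu.1, ?_⟩
                simp only [Finset.mem_filter, Finset.mem_univ, true_and]
                exact hind v hv u hu.2
              · rw [Finset.card_erase_of_mem hv, hcard]
            · intro S hS T hT hST
              simp only [Finset.coe_filter, Set.mem_setOf_eq] at hS hT
              have hST' : S.erase v = T.erase v := hST
              have : insert v (S.erase v) = insert v (T.erase v) := by rw [hST']
              rwa [Finset.insert_erase hS.2, Finset.insert_erase hT.2] at this
        _ = B.card.choose (t - 1) := Finset.card_powersetCard _ _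
        _ ≤ (s - 1).choose (t - 1) := Nat.choose_le_choose _ hBcard
    -- double count
    have hcount : t * I.card ≤ n * (s - 1).choose (t - 1) := by
      have h1 : t * I.card = ∑ S ∈ I, S.card := by
        rw [Finset.sum_congr rfl (fun S hS => ?_), Finset.sum_const, smul_eq_mul, mul_comm]
        · exact (Finset.mem_filter.mp hS).2.1
      have hcard : ∀ S : Finset V, S.card = ∑ v : V, if v ∈ S then 1 else 0 := by
        intro S
        rw [Finset.sum_ite_mem, Finset.univ_inter, Finset.sum_const, smul_eq_mul, mul_one]
      have h2 : ∑ S ∈ I, S.card = ∑ v : V, (I.filter (fun S => v ∈ S)).card := by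
        simp only [Finset.card_filter]
        rw [Finset.sum_comm]
        exact Finset.sum_congr rfl (fun S _ => hcard S)
      rw [h1, h2]
      calc ∑ v : V, (I.filter (fun S => v ∈ S)).card
          ≤ ∑ _v : V, (s - 1).choose (t - 1) := Finset.sum_le_sum (fun v _ => hvert v)
        _ = n * (s - 1).choose (t - 1) := by
            rw [Finset.sum_const, Finset.card_univ, hn, smul_eq_mul]
    -- the identity C(s,t) * t = s * C(s-1,t-1)
    have hid : s.choose t * t = s * (s - 1).choose (t - 1) := by
      obtain ⟨m, hm⟩ := Nat.exists_eq_add_of_le hs1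
      obtain ⟨r, hr⟩ := Nat.exists_eq_add_of_le ht1
      rw [hm, hr]
      simp only [add_comm 1, Nat.add_sub_cancel]
      exact (Nat.add_one_mul_choose_eq m r).symm
    have hfin : indepT G t * t ≤ q * s.choose t * t := by
      rw [hIcard, mul_comm (I.card), mul_assoc, hid, ← mul_assoc, hqs]
      exact hcount
    exact Nat.le_of_mul_le_mul_right hfin ht1
  · -- computation for the complete multipartite graph
    rw [indepT_eq_filter_card (completeMultipartiteGraph fun _ : Fin q => Fin s) t
      (fun S => S.card = t ∧ ∀ u ∈ S, ∀ v ∈ S, ¬ (completeMultipartiteGraph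
        fun _ : Fin q => Fin s).Adj u v) (fun _ => Iff.rfl)]
    have hAdj : ∀ v w : (_ : Fin q) × Fin s,
        (completeMultipartiteGraph fun _ : Fin q => Fin s).Adj v w ↔ v.1 ≠ w.1 :=
      fun _ _ => Iff.rfl
    have key : Finset.univ.filter
        (fun S : Finset ((_ : Fin q) × Fin s) => S.card = t ∧ ∀ u ∈ S, ∀ v ∈ S,
          ¬ (completeMultipartiteGraph fun _ : Fin q => Fin s).Adj u v) =
        (Finset.univ : Finset (Fin q)).biUnion
          (fun i => ((Finset.univ : Finset (Fin s)).powersetCard t).image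
            (fun T => T.map (partEmb q s i))) := by
      ext S
      simp only [Finset.mem_filter, Finset.mem_univ, true_and, Finset.mem_biUnion,
        Finset.mem_image, Finset.mem_powersetCard]
      constructor
      · rintro ⟨hcard, hind⟩
        have hne : S.Nonempty := Finset.card_pos.mp (by omega)
        obtain ⟨w, hw⟩ := hne
        have hfst : ∀ a ∈ S, a.1 = w.1 := by
          intro a ha
          exact not_not.mp ((hAdj a w).not.mp (hind a ha w hw))
        refine ⟨w.1, S.image Sigma.snd, ⟨fun _ _ => Finset.mem_univ _, ?_⟩, ?_⟩
        · rw [Finset.card_image_of_injOn, hcard]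
          intro a ha b hb hab
          rw [sigma_eq a w.1 (hfst a ha), sigma_eq b w.1 (hfst b hb)]
          simp only [hab]
        · ext u
          simp only [Finset.mem_map, Finset.mem_image, partEmb,
            Function.Embedding.coeFn_mk]
          constructor
          · rintro ⟨x, ⟨a, ha, rfl⟩, rfl⟩
            show (⟨w.1, a.2⟩ : (_ : Fin q) × Fin s) ∈ S
            rw [← sigma_eq a w.1 (hfst a ha)]
            exact ha
          · intro hu
            exact ⟨u.2, ⟨u, hu, rfl⟩, (sigma_eq u w.1 (hfst u hu)).symm⟩
      · rintro ⟨i, T, ⟨-, hT⟩, rfl⟩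
        refine ⟨by rw [Finset.card_map, hT], ?_⟩
        intro u hu v hv
        simp only [Finset.mem_map, partEmb, Function.Embedding.coeFn_mk] at hu hv
        obtain ⟨a, -, rfl⟩ := hu
        obtain ⟨b, -, rfl⟩ := hv
        rw [hAdj]
        simp
        rfl
    rw [key, Finset.card_biUnion]
    · have himg : ∀ i : Fin q,
          (((Finset.univ : Finset (Fin s)).powersetCard t).image
            (fun T => T.map (partEmb q s i))).card = s.choose t := by
        intro i
        rw [Finset.card_image_of_injective _ (Finset.map_injective (partEmb q s i)),
          Finset.card_powersetCard, Finset.card_univ, Fintype.card_fin]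
      simp only [himg, Finset.sum_const, Finset.card_univ, Fintype.card_fin, smul_eq_mul]
    · intro i _ j _ hij
      simp only [Finset.disjoint_left, Finset.mem_image, Finset.mem_powersetCard]
      rintro S ⟨T, ⟨-, hT⟩, rfl⟩ ⟨T', ⟨-, hT'⟩, hST⟩
      have hne : T.Nonempty := Finset.card_pos.mp (by omega)
      obtain ⟨x, hx⟩ := hne
      have h1 : (⟨i, x⟩ : (_ : Fin q) × Fin s) ∈ T.map (partEmb q s i) :=
        Finset.mem_map_of_mem _ hx
      rw [← hST] at h1
      simp only [Finset.mem_map, partEmb, Function.Embedding.coeFn_mk] at h1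
      obtain ⟨y, -, hy⟩ := h1
      exact hij (congrArg Sigma.fst hy).symm
end
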